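/- arXiv:1708.02235 — 11 statements merged into one kernel-verified Lean document; each statement's English description precedes it below -/
import Mathlib

section
/- Let E be a real Banach space, P : E → E a continuous linear map, S, T : ℝ → (E → E) two families of continuous linear operators such that for every x ∈ E the maps t ↦ S(t)x and t ↦ T(t)x are continuous, and suppose there are constants M, M_Q > 0 and ω, ω_Q ∈ ℝ with ‖S(t)‖ ≤ M·exp(ω·t) and ‖T(t)‖ ≤ M_Q·exp(ω_Q·t) for all t ≥ 0. Then for every v ∈ E and every t ≥ 0, the error of the t-model approximation of the memory integral satisfies ‖∫₀ᵗ P(S(s)(P(T(t−s)v))) ds − t·P(S(t)(P v))‖ ≤ C₁·((exp(ω_Q·t) − exp(ω·t))/(ω_Q − ω) + t·exp(ω·t)/M_Q) if ω ≠ ω_Q, and ‖∫₀ᵗ P(S(s)(P(T(t−s)v))) ds − t·P(S(t)(P v))‖ ≤ C₁·((M_Q + 1)/M_Q)·t·exp(ω·t) if ω = ω_Q, where C₁ = M·M_Q·‖P‖²·‖v‖. -/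
open MeasureTheory intervalIntegral Filter

/-- **Error bound for the t-model** (Theorem 3.2, abstract form). The error of
the t-model approximation `t • P S(t) P v` of the Mori–Zwanzig memory integral
`∫₀ᵗ P S(s) P T(t-s) v ds`. -/
theorem mz_t_model_error
    {E : Type*} [NormedAddCommGroup E] [NormedSpace ℝ E] [CompleteSpace E]
    (P : E →L[ℝ] E) (S T : ℝ → (E →L[ℝ] E))
    (hScont : ∀ x : E, Continuous fun t : ℝ => S t x)
    (hTcont : ∀ x : E, Continuous fun t : ℝ => T t x)
    (M MQ : ℝ) (hM : 0 < M) (hMQ : 0 < MQ) (ω ωQ : ℝ)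
    (hS : ∀ t : ℝ, 0 ≤ t → ‖S t‖ ≤ M * Real.exp (ω * t))
    (hT : ∀ t : ℝ, 0 ≤ t → ‖T t‖ ≤ MQ * Real.exp (ωQ * t))
    (v : E) (t : ℝ) (ht : 0 ≤ t) :
    (ω ≠ ωQ →
      ‖(∫ s in (0:ℝ)..t, P (S s (P (T (t - s) v)))) - t • P (S t (P v))‖ ≤
        (M * MQ * ‖P‖ ^ 2 * ‖v‖) *
          ((Real.exp (ωQ * t) - Real.exp (ω * t)) / (ωQ - ω) + t * Real.exp (ω * t) / MQ)) ∧
    (ω = ωQ →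
      ‖(∫ s in (0:ℝ)..t, P (S s (P (T (t - s) v)))) - t • P (S t (P v))‖ ≤
        (M * MQ * ‖P‖ ^ 2 * ‖v‖) * ((MQ + 1) / MQ) * t * Real.exp (ω * t)) := by
  set C : ℝ := M * MQ * ‖P‖ ^ 2 * ‖v‖ with hCdef
  have hC0 : 0 ≤ C := by positivity
  set x : ℝ → E := fun s => P (T (t - s) v) with hxdef
  have hx : Continuous x := P.continuous.comp ((hTcont v).comp (by continuity))
  -- uniform bound on ‖S s‖ for s ∈ [0, t]
  have hSb : ∀ s ∈ Set.uIcc (0:ℝ) t, ‖S s‖ ≤ M * Real.exp (|ω| * t) := by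
    intro s hs
    rw [Set.uIcc_of_le ht] at hs
    refine (hS s hs.1).trans ?_
    have h6 : ω * s ≤ |ω| * t :=
      calc ω * s ≤ |ω * s| := le_abs_self _
      _ = |ω| * |s| := abs_mul _ _
      _ ≤ |ω| * t := by
          gcongr
          rw [abs_of_nonneg hs.1]; exact hs.2
    exact mul_le_mul_of_nonneg_left (Real.exp_le_exp.mpr h6) hM.le
  -- continuity of the integrand on [0, t]
  have hcont : ContinuousOn (fun s => P (S s (x s))) (Set.uIcc (0:ℝ) t) := by
    refine P.continuous.comp_continuousOn ?_
    intro s₀ hs₀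
    have h2 : Tendsto (fun s => S s (x s - x s₀)) (nhdsWithin s₀ (Set.uIcc (0:ℝ) t))
        (nhds 0) := by
      apply squeeze_zero_norm' (a := fun s => (M * Real.exp (|ω| * t)) * ‖x s - x s₀‖)
      · filter_upwards [self_mem_nhdsWithin] with s hs
        calc ‖S s (x s - x s₀)‖ ≤ ‖S s‖ * ‖x s - x s₀‖ := (S s).le_opNorm _
          _ ≤ (M * Real.exp (|ω| * t)) * ‖x s - x s₀‖ := by
              gcongr; exact hSb s hs
      · have h3 : Tendsto (fun s => ‖x s - x s₀‖) (nhdsWithin s₀ (Set.uIcc (0:ℝ) t))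
            (nhds 0) := by
          have h7 : Tendsto x (nhdsWithin s₀ (Set.uIcc (0:ℝ) t)) (nhds (x s₀)) :=
            (hx.tendsto s₀).mono_left nhdsWithin_le_nhds
          simpa using (h7.sub_const (x s₀)).norm
        simpa using h3.const_mul (M * Real.exp (|ω| * t))
    have h1 : Tendsto (fun s => S s (x s₀)) (nhdsWithin s₀ (Set.uIcc (0:ℝ) t))
        (nhds (S s₀ (x s₀))) := ((hScont (x s₀)).tendsto s₀).mono_left nhdsWithin_le_nhds
    have h4 : Tendsto (fun s => S s (x s - x s₀) + S s (x s₀))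
        (nhdsWithin s₀ (Set.uIcc (0:ℝ) t)) (nhds (S s₀ (x s₀))) := by
      simpa using h2.add h1
    have h5 : Tendsto (fun s => S s (x s)) (nhdsWithin s₀ (Set.uIcc (0:ℝ) t))
        (nhds (S s₀ (x s₀))) := h4.congr fun s => by simp [map_sub]
    exact h5
  -- norm bound on the integral
  set g : ℝ → ℝ := fun s => C * (Real.exp (ωQ * t) * Real.exp ((ω - ωQ) * s)) with hgdef
  have hgInt : IntervalIntegrable g volume 0 t := by
    exact (continuous_const.mul (continuous_const.mul
      (Real.continuous_exp.comp (continuous_const.mul continuous_id)))).intervalIntegrable _ _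
  have hbound : ∀ s ∈ Set.Ioc (0:ℝ) t, ‖P (S s (x s))‖ ≤ g s := by
    intro s hs
    have hs0 : (0:ℝ) ≤ s := hs.1.le
    have hts : (0:ℝ) ≤ t - s := by linarith [hs.2]
    calc ‖P (S s (x s))‖ ≤ ‖P‖ * ‖S s (x s)‖ := P.le_opNorm _
      _ ≤ ‖P‖ * (‖S s‖ * ‖x s‖) := by gcongr; exact (S s).le_opNorm _
      _ ≤ ‖P‖ * (‖S s‖ * (‖P‖ * (‖T (t - s)‖ * ‖v‖))) := by
          gcongr
          exact (P.le_opNorm _).trans (by gcongr; exact (T (t-s)).le_opNorm v)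
      _ ≤ ‖P‖ * ((M * Real.exp (ω * s)) * (‖P‖ * ((MQ * Real.exp (ωQ * (t - s))) * ‖v‖))) := by
          gcongr
          · exact hS s hs0
          · exact hT _ hts
      _ = g s := by
          simp only [hgdef, hCdef]
          rw [show Real.exp (ωQ*t) * Real.exp ((ω-ωQ)*s)
              = Real.exp (ω*s) * Real.exp (ωQ*(t-s)) by
            rw [← Real.exp_add, ← Real.exp_add]; ring_nf]
          ring
  have hnorm : ‖∫ s in (0:ℝ)..t, P (S s (x s))‖ ≤ ∫ s in (0:ℝ)..t, g s := by
    have h5 := intervalIntegral.norm_integral_le_abs_of_norm_le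
      (f := fun s => P (S s (x s))) (g := g) (μ := volume) (a := 0) (b := t)
      (by rw [Set.uIoc_of_le ht]
          exact (ae_restrict_mem measurableSet_Ioc).mono hbound) hgInt
    refine h5.trans_eq (abs_of_nonneg ?_)
    apply intervalIntegral.integral_nonneg ht
    intro s _
    have : (0:ℝ) < Real.exp (ωQ * t) * Real.exp ((ω - ωQ) * s) := by positivity
    simp only [hgdef]; nlinarith
  -- bound on the t-model term
  have hterm : ‖t • P (S t (P v))‖ ≤ C * (t * Real.exp (ω * t) / MQ) := by
    rw [norm_smul, Real.norm_of_nonneg ht]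
    have : ‖P (S t (P v))‖ ≤ ‖P‖ * ((M * Real.exp (ω * t)) * (‖P‖ * ‖v‖)) := by
      calc ‖P (S t (P v))‖ ≤ ‖P‖ * ‖S t (P v)‖ := P.le_opNorm _
        _ ≤ ‖P‖ * (‖S t‖ * ‖P v‖) := by gcongr; exact (S t).le_opNorm _
        _ ≤ ‖P‖ * ((M * Real.exp (ω * t)) * (‖P‖ * ‖v‖)) := by
            gcongr
            · exact hS t ht
            · exact P.le_opNorm v
    calc t * ‖P (S t (P v))‖ ≤ t * (‖P‖ * ((M * Real.exp (ω * t)) * (‖P‖ * ‖v‖))) := by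
          gcongr
      _ = C * (t * Real.exp (ω * t) / MQ) := by
          rw [hCdef]; field_simp
  have htotal : ‖(∫ s in (0:ℝ)..t, P (S s (x s))) - t • P (S t (P v))‖ ≤
      (∫ s in (0:ℝ)..t, g s) + C * (t * Real.exp (ω * t) / MQ) :=
    (norm_sub_le _ _).trans (add_le_add hnorm hterm)
  constructor
  · intro hne
    have hc : ω - ωQ ≠ 0 := sub_ne_zero.mpr hne
    have hg2 : (∫ s in (0:ℝ)..t, g s) =
        C * ((Real.exp (ωQ * t) - Real.exp (ω * t)) / (ωQ - ω)) := by
      have hexp : (∫ s in (0:ℝ)..t, Real.exp ((ω - ωQ)*s)) =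
          (ω-ωQ)⁻¹ * (Real.exp ((ω-ωQ)*t) - 1) := by
        rw [intervalIntegral.integral_comp_mul_left (fun u => Real.exp u) hc]
        simp [integral_exp, smul_eq_mul]
      have key : Real.exp (ωQ*t) * ((ω-ωQ)⁻¹ * (Real.exp ((ω-ωQ)*t) - 1)) =
          (Real.exp (ωQ*t) - Real.exp (ω*t)) / (ωQ - ω) := by
        have hc' : ωQ - ω ≠ 0 := fun h => hc (by linarith [sub_eq_zero.mp h])
        have he : Real.exp (ωQ*t) * Real.exp ((ω-ωQ)*t) = Real.exp (ω*t) := by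
          rw [← Real.exp_add]; ring_nf
        field_simp
        rw [mul_comm t (ω - ωQ), mul_comm t ω]
        linear_combination (ωQ - ω) * he
      simp only [hgdef]
      rw [intervalIntegral.integral_const_mul, intervalIntegral.integral_const_mul,
        hexp, key]
    refine htotal.trans_eq ?_
    rw [hg2]; ring
  · intro heq
    subst heq
    have hg2 : (∫ s in (0:ℝ)..t, g s) = C * (t * Real.exp (ω * t)) := by
      simp only [hgdef, sub_self, zero_mul, Real.exp_zero, mul_one]
      rw [intervalIntegral.integral_const_mul]
      simp [mul_comm]
    refine htotal.trans_eq ?_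
    rw [hg2]
    field_simp
end

section
/- Let E be a real Banach space, P : E → E a continuous linear map, S, T : ℝ → (E → E) two families of continuous linear operators such that for every x ∈ E the maps t ↦ S(t)x and t ↦ T(t)x are continuous, and suppose there are constants M, M_Q > 0 and ω, ω_Q ∈ ℝ with ‖S(t)‖ ≤ M·exp(ω·t) and ‖T(t)‖ ≤ M_Q·exp(ω_Q·t) for all t ≥ 0. Then for every v ∈ E and all 0 ≤ Δt ≤ t, the error of the short-memory approximation satisfies ‖∫₀ᵗ P(S(s)(P(T(t−s)v))) ds − ∫_{t−Δt}^{t} P(S(s)(P(T(t−s)v))) ds‖ ≤ C₁·(t−Δt)·exp(ω_Q·t) if ω = ω_Q, and ‖∫₀ᵗ P(S(s)(P(T(t−s)v))) ds − ∫_{t−Δt}^{t} P(S(s)(P(T(t−s)v))) ds‖ ≤ C₁·exp(ω_Q·Δt)·(exp(ω·(t−Δt)) − exp(ω_Q·(t−Δt)))/(ω − ω_Q) if ω ≠ ω_Q, where C₁ = M·M_Q·‖P‖²·‖v‖. -/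
open MeasureTheory intervalIntegral Filter

lemma mz_aux_cont {E : Type*} [NormedAddCommGroup E] [NormedSpace ℝ E]
    (S : ℝ → (E →L[ℝ] E)) (hScont : ∀ x : E, Continuous fun t : ℝ => S t x)
    (g : ℝ → E) (hg : Continuous g) (K : ℝ)
    (t : ℝ) (hK : ∀ s ∈ Set.Icc (0:ℝ) t, ‖S s‖ ≤ K) :
    ContinuousOn (fun s => S s (g s)) (Set.Icc (0:ℝ) t) := by
  intro s₀ hs₀
  have hA : Tendsto (fun s => S s (g s - g s₀)) (nhdsWithin s₀ (Set.Icc 0 t)) (nhds 0) := by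
    apply squeeze_zero_norm' (a := fun s => K * ‖g s - g s₀‖) ?_ ?_
    · filter_upwards [self_mem_nhdsWithin] with s hs
      calc ‖S s (g s - g s₀)‖ ≤ ‖S s‖ * ‖g s - g s₀‖ := (S s).le_opNorm _
        _ ≤ K * ‖g s - g s₀‖ :=
            mul_le_mul_of_nonneg_right (hK s hs) (norm_nonneg _)
    · have : Tendsto (fun s => K * ‖g s - g s₀‖) (nhds s₀) (nhds (K * ‖g s₀ - g s₀‖)) :=
        (Continuous.mul continuous_const ((hg.sub continuous_const).norm)).tendsto s₀
      simpa using this.mono_left nhdsWithin_le_nhds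
  have hB : Tendsto (fun s => S s (g s₀)) (nhdsWithin s₀ (Set.Icc 0 t)) (nhds (S s₀ (g s₀))) :=
    ((hScont (g s₀)).tendsto s₀).mono_left nhdsWithin_le_nhds
  have h := hA.add hB
  simp only [zero_add] at h
  have heq : (fun s => S s (g s - g s₀) + S s (g s₀)) = fun s => S s (g s) := by
    funext s; rw [← map_add, sub_add_cancel]
  rw [heq] at h
  exact h

/-- **Error bound for the short-memory approximation** (Theorem 3.3, abstract
form). The integration interval `[0,t]` of the Mori–Zwanzig memory integral is
replaced by `[t-Δt, t]` with memory length `Δt`. -/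
theorem mz_short_memory_error
    {E : Type*} [NormedAddCommGroup E] [NormedSpace ℝ E] [CompleteSpace E]
    (P : E →L[ℝ] E) (S T : ℝ → (E →L[ℝ] E))
    (hScont : ∀ x : E, Continuous fun t : ℝ => S t x)
    (hTcont : ∀ x : E, Continuous fun t : ℝ => T t x)
    (M MQ : ℝ) (hM : 0 < M) (hMQ : 0 < MQ) (ω ωQ : ℝ)
    (hS : ∀ t : ℝ, 0 ≤ t → ‖S t‖ ≤ M * Real.exp (ω * t))
    (hT : ∀ t : ℝ, 0 ≤ t → ‖T t‖ ≤ MQ * Real.exp (ωQ * t))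
    (v : E) (t Δt : ℝ) (hΔt : 0 ≤ Δt) (hΔtt : Δt ≤ t) :
    (ω = ωQ →
      ‖(∫ s in (0:ℝ)..t, P (S s (P (T (t - s) v)))) -
          ∫ s in (t - Δt)..t, P (S s (P (T (t - s) v)))‖ ≤
        (M * MQ * ‖P‖ ^ 2 * ‖v‖) * (t - Δt) * Real.exp (ωQ * t)) ∧
    (ω ≠ ωQ →
      ‖(∫ s in (0:ℝ)..t, P (S s (P (T (t - s) v)))) -
          ∫ s in (t - Δt)..t, P (S s (P (T (t - s) v)))‖ ≤
        (M * MQ * ‖P‖ ^ 2 * ‖v‖) * Real.exp (ωQ * Δt) *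
          (Real.exp (ω * (t - Δt)) - Real.exp (ωQ * (t - Δt))) / (ω - ωQ)) := by
  have ht : (0:ℝ) ≤ t := le_trans hΔt hΔtt
  have hτ : (0:ℝ) ≤ t - Δt := by linarith
  set C : ℝ := M * MQ * ‖P‖ ^ 2 * ‖v‖ with hC
  have hC0 : 0 ≤ C := by positivity
  set τ : ℝ := t - Δt with hτdef
  set f : ℝ → E := fun s => P (S s (P (T (t - s) v))) with hf
  have hg : Continuous fun s : ℝ => P (T (t - s) v) :=
    P.continuous.comp ((hTcont v).comp (continuous_const.sub continuous_id))
  have hK : ∀ s ∈ Set.Icc (0:ℝ) t, ‖S s‖ ≤ M * Real.exp (|ω| * t) := by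
    intro s hs
    refine (hS s hs.1).trans ?_
    have h1 : ω * s ≤ |ω| * t :=
      le_trans (mul_le_mul_of_nonneg_right (le_abs_self ω) hs.1)
        (mul_le_mul_of_nonneg_left hs.2 (abs_nonneg ω))
    exact mul_le_mul_of_nonneg_left (Real.exp_le_exp.2 h1) hM.le
  have hfc : ContinuousOn f (Set.Icc 0 t) :=
    P.continuous.comp_continuousOn
      (mz_aux_cont S hScont _ hg (M * Real.exp (|ω| * t)) t hK)
  have hint1 : IntervalIntegrable f volume 0 τ := by
    apply ContinuousOn.intervalIntegrable
    apply hfc.mono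
    rw [Set.uIcc_of_le hτ]
    exact Set.Icc_subset_Icc le_rfl (by linarith)
  have hint2 : IntervalIntegrable f volume τ t := by
    apply ContinuousOn.intervalIntegrable
    apply hfc.mono
    rw [Set.uIcc_of_le (by linarith : τ ≤ t)]
    exact Set.Icc_subset_Icc hτ le_rfl
  have hsplit : (∫ s in (0:ℝ)..t, f s) - ∫ s in τ..t, f s = ∫ s in (0:ℝ)..τ, f s := by
    rw [← integral_add_adjacent_intervals hint1 hint2]; abel
  have hbound : ∀ s ∈ Set.Icc (0:ℝ) τ, ‖f s‖ ≤ C * Real.exp (ω * s + ωQ * (t - s)) := by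
    intro s hs
    have hs0 : 0 ≤ s := hs.1
    have hts : 0 ≤ t - s := by
      have := hs.2; simp only [hτdef] at this; linarith
    have h1 : ‖f s‖ ≤ ‖P‖ * (‖S s‖ * (‖P‖ * (‖T (t - s)‖ * ‖v‖))) := by
      refine (P.le_opNorm _).trans ?_
      refine mul_le_mul_of_nonneg_left ?_ (norm_nonneg P)
      refine ((S s).le_opNorm _).trans ?_
      refine mul_le_mul_of_nonneg_left ?_ (norm_nonneg _)
      refine (P.le_opNorm _).trans ?_
      exact mul_le_mul_of_nonneg_left ((T (t - s)).le_opNorm v) (norm_nonneg P)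
    refine h1.trans ?_
    have h2 : ‖P‖ * (‖S s‖ * (‖P‖ * (‖T (t - s)‖ * ‖v‖))) ≤
        ‖P‖ * ((M * Real.exp (ω * s)) * (‖P‖ * ((MQ * Real.exp (ωQ * (t - s))) * ‖v‖))) := by
      gcongr
      · exact hS s hs0
      · exact hT _ hts
    refine h2.trans_eq ?_
    rw [Real.exp_add, hC]; ring
  constructor
  · -- case ω = ωQ
    intro hω
    subst hω
    rw [hsplit]
    have hb : ∀ x ∈ Set.uIoc (0:ℝ) τ, ‖f x‖ ≤ C * Real.exp (ω * t) := by
      intro x hx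
      rw [Set.uIoc_of_le hτ] at hx
      have := hbound x ⟨hx.1.le, hx.2⟩
      refine this.trans_eq ?_
      congr 1; ring_nf
    have := intervalIntegral.norm_integral_le_of_norm_le_const hb
    rw [sub_zero, abs_of_nonneg hτ] at this
    refine this.trans_eq ?_
    ring
  · -- case ω ≠ ωQ
    intro hω
    rw [hsplit]
    have hc : ω - ωQ ≠ 0 := sub_ne_zero.2 hω
    have hbint : IntervalIntegrable (fun s => C * Real.exp (ω * s + ωQ * (t - s))) volume 0 τ := by
      exact (continuous_const.mul (Real.continuous_exp.comp
        (((continuous_const.mul continuous_id).add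
          (continuous_const.mul (continuous_const.sub continuous_id)))))).intervalIntegrable _ _
    have hnorm := intervalIntegral.norm_integral_le_abs_of_norm_le
      (f := f) (g := fun s => C * Real.exp (ω * s + ωQ * (t - s))) (μ := volume) (a := 0) (b := τ)
      ?_ hbint
    · refine hnorm.trans ?_
      have heq : ∀ s : ℝ, C * Real.exp (ω * s + ωQ * (t - s)) =
          (C * Real.exp (ωQ * t)) * Real.exp ((ω - ωQ) * s) := by
        intro s
        have h3 : Real.exp (ωQ * t) * Real.exp ((ω - ωQ) * s) =
            Real.exp (ω * s + ωQ * (t - s)) := by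
          rw [← Real.exp_add]; congr 1; ring
        conv_rhs => rw [mul_assoc, h3]
      simp only [heq]
      rw [intervalIntegral.integral_const_mul, integral_comp_mul_left (fun x => Real.exp x) hc,
        integral_exp, mul_zero, Real.exp_zero, smul_eq_mul]
      have hval : C * Real.exp (ωQ * t) * ((ω - ωQ)⁻¹ * (Real.exp ((ω - ωQ) * τ) - 1)) =
          C * Real.exp (ωQ * Δt) * (Real.exp (ω * τ) - Real.exp (ωQ * τ)) / (ω - ωQ) := by
        have e1 : Real.exp (ωQ * t) * Real.exp ((ω - ωQ) * τ) =
            Real.exp (ωQ * Δt) * Real.exp (ω * τ) := by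
          rw [← Real.exp_add, ← Real.exp_add]; congr 1; rw [hτdef]; ring
        have e2 : Real.exp (ωQ * t) = Real.exp (ωQ * Δt) * Real.exp (ωQ * τ) := by
          rw [← Real.exp_add]; congr 1; rw [hτdef]; ring
        field_simp
        linear_combination C * e1 - C * e2
      rw [hval]
      apply le_of_eq
      have hpos : 0 ≤ (Real.exp (ω * τ) - Real.exp (ωQ * τ)) / (ω - ωQ) := by
        rw [div_nonneg_iff]
        rcases lt_or_gt_of_ne hω with h | h
        · right
          constructor
          · simp only [sub_nonpos]
            exact Real.exp_le_exp.2 (mul_le_mul_of_nonneg_right h.le hτ)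
          · linarith
        · left
          constructor
          · simp only [sub_nonneg]
            exact Real.exp_le_exp.2 (mul_le_mul_of_nonneg_right h.le hτ)
          · linarith
      apply abs_of_nonneg
      rw [mul_div_assoc]
      positivity
    · filter_upwards [ae_restrict_mem measurableSet_uIoc] with s hs
      rw [Set.uIoc_of_le hτ] at hs
      exact hbound s ⟨hs.1.le, hs.2⟩
end

section
/- Let E be a real Banach space, P : E → E a continuous linear map, S, T : ℝ → (E → E) two families of continuous linear operators such that for every x ∈ E the maps t ↦ S(t)x and t ↦ T(t)x are continuous, and suppose there are constants M, M_Q > 0 and ω, ω_Q ∈ ℝ with ‖S(t)‖ ≤ M·exp(ω·t) and ‖T(t)‖ ≤ M_Q·exp(ω_Q·t) for all t ≥ 0. Fix T > 0 and an integer p ≥ 1, and set A₁ = max(1, exp(T·(ω − ω_Q))) and A₂ = max(1, exp(T·ω_Q)). Then for every v ∈ E and every t with 0 ≤ t ≤ T, the p-th order H-model truncation error of the memory integral satisfies ‖∫₀ᵗ ((t−σ)^{p−1}/(p−1)!) · (∫₀^σ P(S(s)(P(T(σ−s)v))) ds) dσ‖ ≤ M·M_Q·‖P‖²·A₁·A₂·‖v‖·t^{p+1}/(p+1)!.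 -/
open MeasureTheory intervalIntegral Filter

lemma exp_mul_le_max {c s Tf : ℝ} (hs : 0 ≤ s) (hsT : s ≤ Tf) :
    Real.exp (c * s) ≤ max 1 (Real.exp (Tf * c)) := by
  rcases le_or_gt c 0 with hc | hc
  · exact le_max_of_le_left (Real.exp_le_one_iff.mpr (mul_nonpos_of_nonpos_of_nonneg hc hs))
  · refine le_max_of_le_right (Real.exp_le_exp.mpr ?_)
    rw [mul_comm Tf c]
    exact mul_le_mul_of_nonneg_left hsT hc.le

lemma aux_integral (n : ℕ) (t : ℝ) :
    ∫ σ in (0:ℝ)..t, (t - σ) ^ n * σ = t ^ (n + 2) / ((n + 1) * (n + 2)) := by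
  have h1 : ∀ m : ℕ, ∫ σ in (0:ℝ)..t, (t - σ) ^ m = t ^ (m + 1) / (m + 1) := by
    intro m
    rw [intervalIntegral.integral_comp_sub_left (fun x => x ^ m) t]
    simp [integral_pow]
  have key : ∀ σ : ℝ, (t - σ) ^ n * σ = t * (t - σ) ^ n - (t - σ) ^ (n + 1) := by
    intro σ; ring
  rw [intervalIntegral.integral_congr (g := fun σ => t * (t - σ) ^ n - (t - σ) ^ (n + 1))
    (fun σ _ => key σ)]
  rw [intervalIntegral.integral_sub, intervalIntegral.integral_const_mul, h1, h1]
  · push_cast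
    have h2 : (n : ℝ) + 1 ≠ 0 := by positivity
    have h3 : (n : ℝ) + 2 ≠ 0 := by positivity
    field_simp
    ring
  · exact (IntervalIntegrable.const_mul (by
      apply Continuous.intervalIntegrable; continuity) t)
  · apply Continuous.intervalIntegrable; continuity

/-- **Accuracy of the H-model** (Theorem 3.4, abstract form). Bound on the
p-th order H-model truncation error of the Mori–Zwanzig memory integral,
written via Cauchy's formula for repeated integration. -/
theorem mz_H_model_accuracy
    {E : Type*} [NormedAddCommGroup E] [NormedSpace ℝ E] [CompleteSpace E]
    (P : E →L[ℝ] E) (S T : ℝ → (E →L[ℝ] E))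
    (hScont : ∀ x : E, Continuous fun t : ℝ => S t x)
    (hTcont : ∀ x : E, Continuous fun t : ℝ => T t x)
    (M MQ : ℝ) (hM : 0 < M) (hMQ : 0 < MQ) (ω ωQ : ℝ)
    (hS : ∀ t : ℝ, 0 ≤ t → ‖S t‖ ≤ M * Real.exp (ω * t))
    (hT : ∀ t : ℝ, 0 ≤ t → ‖T t‖ ≤ MQ * Real.exp (ωQ * t))
    (Tf : ℝ) (hTf : 0 < Tf) (p : ℕ) (hp : 1 ≤ p)
    (A₁ A₂ : ℝ) (hA₁ : A₁ = max 1 (Real.exp (Tf * (ω - ωQ))))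
    (hA₂ : A₂ = max 1 (Real.exp (Tf * ωQ)))
    (v : E) (t : ℝ) (ht0 : 0 ≤ t) (htT : t ≤ Tf) :
    ‖∫ σ in (0:ℝ)..t, ((t - σ) ^ (p - 1) / (Nat.factorial (p - 1) : ℝ)) •
        (∫ s in (0:ℝ)..σ, P (S s (P (T (σ - s) v))))‖ ≤
      M * MQ * ‖P‖ ^ 2 * A₁ * A₂ * ‖v‖ * t ^ (p + 1) / (Nat.factorial (p + 1) : ℝ) := by
  obtain ⟨n, rfl⟩ : ∃ n, p = n + 1 := ⟨p - 1, (Nat.succ_pred_eq_of_pos hp).symm⟩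
  simp only [Nat.add_sub_cancel]
  set C : ℝ := M * MQ * ‖P‖ ^ 2 * A₁ * A₂ * ‖v‖ with hC
  have hA₁0 : (0:ℝ) ≤ A₁ := hA₁ ▸ le_max_of_le_left zero_le_one
  have hA₂0 : (0:ℝ) ≤ A₂ := hA₂ ▸ le_max_of_le_left zero_le_one
  have hC0 : 0 ≤ C := by positivity
  -- inner bound
  have inner_bound : ∀ σ : ℝ, 0 ≤ σ → σ ≤ t →
      ‖∫ s in (0:ℝ)..σ, P (S s (P (T (σ - s) v)))‖ ≤ C * σ := by
    intro σ hσ0 hσt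
    have h := intervalIntegral.norm_integral_le_of_norm_le_const
      (a := 0) (b := σ) (C := C) (f := fun s => P (S s (P (T (σ - s) v)))) ?_
    · rwa [sub_zero, abs_of_nonneg hσ0] at h
    · intro s hs
      rw [Set.uIoc_of_le hσ0] at hs
      have hs0 : 0 ≤ s := hs.1.le
      have hsσ : s ≤ σ := hs.2
      have hsT : s ≤ Tf := hsσ.trans (hσt.trans htT)
      have hσT : σ ≤ Tf := hσt.trans htT
      have hσs0 : 0 ≤ σ - s := by linarith
      have hSb : ‖S s‖ ≤ M * Real.exp (ω * s) := hS s hs0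
      have hTb : ‖T (σ - s)‖ ≤ MQ * Real.exp (ωQ * (σ - s)) := hT _ hσs0
      have step1 : ‖T (σ - s) v‖ ≤ MQ * Real.exp (ωQ * (σ - s)) * ‖v‖ :=
        le_trans ((T _).le_opNorm v) (mul_le_mul_of_nonneg_right hTb (norm_nonneg v))
      have step2 : ‖P (T (σ - s) v)‖ ≤ ‖P‖ * (MQ * Real.exp (ωQ * (σ - s)) * ‖v‖) :=
        le_trans (P.le_opNorm _) (mul_le_mul_of_nonneg_left step1 (norm_nonneg _))
      have step3 : ‖S s (P (T (σ - s) v))‖ ≤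
          (M * Real.exp (ω * s)) * (‖P‖ * (MQ * Real.exp (ωQ * (σ - s)) * ‖v‖)) :=
        le_trans ((S s).le_opNorm _)
          (mul_le_mul hSb step2 (norm_nonneg _) (by positivity))
      have step4 : ‖P (S s (P (T (σ - s) v)))‖ ≤
          ‖P‖ * ((M * Real.exp (ω * s)) * (‖P‖ * (MQ * Real.exp (ωQ * (σ - s)) * ‖v‖))) :=
        le_trans (P.le_opNorm _) (mul_le_mul_of_nonneg_left step3 (norm_nonneg _))
      have hexp : Real.exp (ω * s) * Real.exp (ωQ * (σ - s)) ≤ A₁ * A₂ := by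
        rw [← Real.exp_add]
        have h' : ω * s + ωQ * (σ - s) = (ω - ωQ) * s + ωQ * σ := by ring
        rw [h', Real.exp_add]
        exact mul_le_mul (hA₁ ▸ exp_mul_le_max hs0 hsT) (hA₂ ▸ exp_mul_le_max hσ0 hσT)
          (Real.exp_pos _).le hA₁0
      have step5 : M * MQ * ‖P‖ ^ 2 * (Real.exp (ω * s) * Real.exp (ωQ * (σ - s))) * ‖v‖ ≤ C := by
        rw [hC]
        have := mul_le_mul_of_nonneg_right
          (mul_le_mul_of_nonneg_left hexp
            (by positivity : (0:ℝ) ≤ M * MQ * ‖P‖ ^ 2)) (norm_nonneg v)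
        linarith
      calc ‖P (S s (P (T (σ - s) v)))‖
          ≤ ‖P‖ * ((M * Real.exp (ω * s)) * (‖P‖ * (MQ * Real.exp (ωQ * (σ - s)) * ‖v‖))) := step4
        _ = M * MQ * ‖P‖ ^ 2 * (Real.exp (ω * s) * Real.exp (ωQ * (σ - s))) * ‖v‖ := by ring
        _ ≤ C := step5
  -- outer bound
  have houter : ‖∫ σ in (0:ℝ)..t, ((t - σ) ^ n / (Nat.factorial n : ℝ)) •
        (∫ s in (0:ℝ)..σ, P (S s (P (T (σ - s) v))))‖ ≤
      |∫ σ in (0:ℝ)..t, ((t - σ) ^ n / (Nat.factorial n : ℝ)) * (C * σ)| := by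
    apply intervalIntegral.norm_integral_le_abs_of_norm_le
    · rw [Set.uIoc_of_le ht0]
      refine (ae_restrict_iff' measurableSet_Ioc).mpr (Eventually.of_forall fun σ hσ => ?_)
      have hσ0 : 0 ≤ σ := hσ.1.le
      have hσt : σ ≤ t := hσ.2
      have hk0 : 0 ≤ (t - σ) ^ n / (Nat.factorial n : ℝ) := by
        have : 0 ≤ t - σ := by linarith
        positivity
      rw [norm_smul, Real.norm_eq_abs, abs_of_nonneg hk0]
      exact mul_le_mul_of_nonneg_left (inner_bound σ hσ0 hσt) hk0
    · exact (((((continuous_const.sub continuous_id).pow n).div_const _).mul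
        (continuous_const.mul continuous_id)) : Continuous fun σ : ℝ =>
          ((t - σ) ^ n / (Nat.factorial n : ℝ)) * (C * σ)).intervalIntegrable 0 t
  refine houter.trans ?_
  have heq : ∀ σ : ℝ, ((t - σ) ^ n / (Nat.factorial n : ℝ)) * (C * σ) =
      (C / (Nat.factorial n : ℝ)) * ((t - σ) ^ n * σ) := fun σ => by ring
  rw [intervalIntegral.integral_congr (g := fun σ => (C / (Nat.factorial n : ℝ)) * ((t - σ) ^ n * σ))
    (fun σ _ => heq σ), intervalIntegral.integral_const_mul, aux_integral]
  have hfac : (0:ℝ) < (Nat.factorial n : ℝ) := by exact_mod_cast n.factorial_pos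
  have hval : (0:ℝ) ≤ C / (Nat.factorial n : ℝ) * (t ^ (n + 2) / ((n + 1) * (n + 2))) := by
    positivity
  rw [abs_of_nonneg hval]
  have hfac2 : ((n + 1 + 1).factorial : ℝ) = (n.factorial : ℝ) * (((n:ℝ) + 1) * ((n:ℝ) + 2)) := by
    simp [Nat.factorial_succ]
    push_cast
    ring
  rw [hfac2]
  apply le_of_eq
  have hne1 : (n:ℝ) + 1 ≠ 0 := by positivity
  have hne2 : (n:ℝ) + 2 ≠ 0 := by positivity
  have hpow : t ^ (n + 1 + 1) = t ^ (n + 2) := by norm_num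
  rw [hpow]
  field_simp
end

section
/- Let E be a real Banach space, P : E → E a continuous linear map, S, T : ℝ → (E → E) two families of continuous linear operators such that for every x ∈ E the maps t ↦ S(t)x and t ↦ T(t)x are continuous, and suppose there are constants M, M_Q > 0 and ω, ω_Q ∈ ℝ with ‖S(t)‖ ≤ M·exp(ω·t) and ‖T(t)‖ ≤ M_Q·exp(ω_Q·t) for all t ≥ 0. Fix T > 0, an integer p ≥ 1, a memory length Δt ≥ 0, and set A₁ = max(1, exp(T·(ω − ω_Q))), A₂ = max(1, exp(T·ω_Q)). Then for every v ∈ E and every t with Δt ≤ t ≤ T, the error of the Type-I finite memory approximation satisfies ‖∫₀^{t−Δt} ((t−Δt−σ)^{p−1}/(p−1)!) · (∫₀^σ P(S(s)(P(T(σ + Δt − s)v))) ds) dσ‖ ≤ M·M_Q·‖P‖²·A₁·A₂·‖v‖·(t−Δt)^{p+1}/(p+1)!. -/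
open MeasureTheory intervalIntegral Filter

/-- **Accuracy of the Type-I finite memory approximation** (Theorem 3.8,
abstract form). Bound on the error of the Type-I FMA of the Mori–Zwanzig
memory integral, written via Cauchy's formula for repeated integration. -/
theorem mz_type1_FMA_accuracy
    {E : Type*} [NormedAddCommGroup E] [NormedSpace ℝ E] [CompleteSpace E]
    (P : E →L[ℝ] E) (S T : ℝ → (E →L[ℝ] E))
    (hScont : ∀ x : E, Continuous fun t : ℝ => S t x)
    (hTcont : ∀ x : E, Continuous fun t : ℝ => T t x)
    (M MQ : ℝ) (hM : 0 < M) (hMQ : 0 < MQ) (ω ωQ : ℝ)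
    (hS : ∀ t : ℝ, 0 ≤ t → ‖S t‖ ≤ M * Real.exp (ω * t))
    (hT : ∀ t : ℝ, 0 ≤ t → ‖T t‖ ≤ MQ * Real.exp (ωQ * t))
    (Tf : ℝ) (hTf : 0 < Tf) (p : ℕ) (hp : 1 ≤ p) (Δt : ℝ) (hΔt : 0 ≤ Δt)
    (A₁ A₂ : ℝ) (hA₁ : A₁ = max 1 (Real.exp (Tf * (ω - ωQ))))
    (hA₂ : A₂ = max 1 (Real.exp (Tf * ωQ)))
    (v : E) (t : ℝ) (ht0 : Δt ≤ t) (htT : t ≤ Tf) :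
    ‖∫ σ in (0:ℝ)..(t - Δt), ((t - Δt - σ) ^ (p - 1) / (Nat.factorial (p - 1) : ℝ)) •
        (∫ s in (0:ℝ)..σ, P (S s (P (T (σ + Δt - s) v))))‖ ≤
      M * MQ * ‖P‖ ^ 2 * A₁ * A₂ * ‖v‖ * (t - Δt) ^ (p + 1) / (Nat.factorial (p + 1) : ℝ) := by
  obtain ⟨q, rfl⟩ : ∃ q, p = q + 1 := ⟨p - 1, (Nat.succ_pred_eq_of_pos hp).symm⟩
  set τ : ℝ := t - Δt with hτdef
  have hτ : 0 ≤ τ := sub_nonneg.2 ht0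
  have hτT : τ ≤ Tf := le_trans (sub_le_self _ hΔt) htT
  set C : ℝ := M * MQ * ‖P‖ ^ 2 * A₁ * A₂ * ‖v‖ with hCdef
  have hA₁1 : (1:ℝ) ≤ A₁ := hA₁ ▸ le_max_left _ _
  have hA₂1 : (1:ℝ) ≤ A₂ := hA₂ ▸ le_max_left _ _
  have hC : 0 ≤ C := by
    have h1 : (0:ℝ) < A₁ := lt_of_lt_of_le one_pos hA₁1
    have h2 : (0:ℝ) < A₂ := lt_of_lt_of_le one_pos hA₂1
    positivity
  -- key exponential bound
  have key : ∀ c x : ℝ, 0 ≤ x → x ≤ Tf → Real.exp (c * x) ≤ max 1 (Real.exp (Tf * c)) := by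
    intro c x hx hxT
    rcases le_total c 0 with hc | hc
    · refine le_max_of_le_left ?_
      rw [← Real.exp_zero]
      exact Real.exp_le_exp.2 (mul_nonpos_of_nonpos_of_nonneg hc hx)
    · refine le_max_of_le_right ?_
      rw [mul_comm Tf c]
      exact Real.exp_le_exp.2 (mul_le_mul_of_nonneg_left hxT hc)
  -- inner integral bound
  have hinner : ∀ σ ∈ Set.Icc (0:ℝ) τ,
      ‖∫ s in (0:ℝ)..σ, P (S s (P (T (σ + Δt - s) v)))‖ ≤ C * σ := by
    rintro σ ⟨hσ0, hστ⟩
    have hb : ∀ s ∈ Set.uIoc (0:ℝ) σ, ‖P (S s (P (T (σ + Δt - s) v)))‖ ≤ C := by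
      intro s hs
      rw [Set.uIoc_of_le hσ0] at hs
      obtain ⟨hs0, hsσ⟩ := hs
      set u : ℝ := σ + Δt - s with hudef
      have hu0 : 0 ≤ u := by simp only [hudef]; linarith
      have hsTf : s ≤ Tf := by linarith
      have huTf : u ≤ Tf := by simp only [hudef]; linarith
      have hexp : Real.exp (ω * s) * Real.exp (ωQ * u) ≤ A₁ * A₂ := by
        have e1 : Real.exp ((ω - ωQ) * s) ≤ A₁ := hA₁ ▸ key (ω - ωQ) s hs0.le hsTf
        have e2 : Real.exp (ωQ * (σ + Δt)) ≤ A₂ := by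
          refine hA₂ ▸ key ωQ (σ + Δt) (by linarith) (by linarith)
        have : ω * s + ωQ * u = (ω - ωQ) * s + ωQ * (σ + Δt) := by
          simp only [hudef]; ring
        rw [← Real.exp_add, this, Real.exp_add]
        exact mul_le_mul e1 e2 (Real.exp_pos _).le (le_trans zero_le_one hA₁1)
      have hSn : ‖S s‖ ≤ M * Real.exp (ω * s) := hS s hs0.le
      have hTn : ‖T u‖ ≤ MQ * Real.exp (ωQ * u) := hT u hu0
      calc ‖P (S s (P (T u v)))‖
          ≤ ‖P‖ * ‖S s (P (T u v))‖ := P.le_opNorm _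
        _ ≤ ‖P‖ * (‖S s‖ * ‖P (T u v)‖) := by
            gcongr; exact (S s).le_opNorm _
        _ ≤ ‖P‖ * (‖S s‖ * (‖P‖ * ‖T u v‖)) := by
            gcongr; exact P.le_opNorm _
        _ ≤ ‖P‖ * (‖S s‖ * (‖P‖ * (‖T u‖ * ‖v‖))) := by
            gcongr; exact (T u).le_opNorm _
        _ ≤ ‖P‖ * ((M * Real.exp (ω * s)) * (‖P‖ * ((MQ * Real.exp (ωQ * u)) * ‖v‖))) := by
            gcongr
        _ = (M * MQ * ‖P‖ ^ 2 * ‖v‖) * (Real.exp (ω * s) * Real.exp (ωQ * u)) := by ring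
        _ ≤ (M * MQ * ‖P‖ ^ 2 * ‖v‖) * (A₁ * A₂) :=
            mul_le_mul_of_nonneg_left hexp (by positivity)
        _ = C := by rw [hCdef]; ring
    have := intervalIntegral.norm_integral_le_of_norm_le_const hb
    rwa [sub_zero, abs_of_nonneg hσ0] at this
  -- bound the outer integral by the integral of the scalar bound
  set g : ℝ → ℝ := fun σ => C / (Nat.factorial q : ℝ) * ((τ - σ) ^ q * σ) with hgdef
  have hgcont : Continuous g := by fun_prop
  have hbound : ‖∫ σ in (0:ℝ)..τ, ((τ - σ) ^ (q + 1 - 1) / (Nat.factorial (q + 1 - 1) : ℝ)) •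
      (∫ s in (0:ℝ)..σ, P (S s (P (T (σ + Δt - s) v))))‖ ≤ ∫ σ in (0:ℝ)..τ, g σ := by
    have habs : ∀ σ ∈ Set.Icc (0:ℝ) τ, 0 ≤ g σ := by
      rintro σ ⟨h1, h2⟩
      have h3 : (0:ℝ) ≤ τ - σ := by linarith
      rw [hgdef]; positivity
    have h0 : 0 ≤ ∫ σ in (0:ℝ)..τ, g σ := intervalIntegral.integral_nonneg hτ habs
    refine le_trans (intervalIntegral.norm_integral_le_abs_of_norm_le
      ((MeasureTheory.ae_restrict_iff' measurableSet_uIoc).2 (Eventually.of_forall ?_))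
      (hgcont.intervalIntegrable _ _)) (le_of_eq (abs_of_nonneg h0))
    intro σ hσ
    rw [Set.uIoc_of_le hτ] at hσ
    obtain ⟨hσ0, hστ⟩ := hσ
    have hfq : (0:ℝ) < (Nat.factorial q : ℝ) := by positivity
    have hco : 0 ≤ (τ - σ) ^ q / (Nat.factorial q : ℝ) := by
      have : (0:ℝ) ≤ τ - σ := by linarith
      positivity
    rw [norm_smul, Real.norm_eq_abs]
    simp only [Nat.add_sub_cancel]
    rw [abs_of_nonneg hco, hgdef]
    have := mul_le_mul_of_nonneg_left (hinner σ ⟨hσ0.le, hστ⟩) hco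
    calc (τ - σ) ^ q / (Nat.factorial q : ℝ) * ‖∫ s in (0:ℝ)..σ, P (S s (P (T (σ + Δt - s) v)))‖
        ≤ (τ - σ) ^ q / (Nat.factorial q : ℝ) * (C * σ) := this
      _ = C / (Nat.factorial q : ℝ) * ((τ - σ) ^ q * σ) := by ring
  -- compute the integral of g
  have hpow : ∀ k : ℕ, (∫ σ in (0:ℝ)..τ, (τ - σ) ^ k) = τ ^ (k + 1) / (k + 1) := by
    intro k
    rw [intervalIntegral.integral_comp_sub_left (fun u => u ^ k) τ]
    simp [integral_pow]
  have hsplit : (∫ σ in (0:ℝ)..τ, (τ - σ) ^ q * σ) = τ ^ (q + 2) / ((q + 1) * (q + 2)) := by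
    have h1 : (fun σ : ℝ => (τ - σ) ^ q * σ) =
        fun σ : ℝ => τ * (τ - σ) ^ q - (τ - σ) ^ (q + 1) := by
      funext σ; ring
    rw [h1, intervalIntegral.integral_sub
      ((by fun_prop : Continuous fun σ : ℝ => τ * (τ - σ) ^ q).intervalIntegrable _ _)
      ((by fun_prop : Continuous fun σ : ℝ => (τ - σ) ^ (q + 1)).intervalIntegrable _ _),
      intervalIntegral.integral_const_mul, hpow q, hpow (q + 1)]
    have h2 : ((q:ℝ) + 1) ≠ 0 := by positivity
    have h3 : ((q:ℝ) + 1 + 1) ≠ 0 := by positivity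
    push_cast
    field_simp
    ring
  have hgint : (∫ σ in (0:ℝ)..τ, g σ) =
      C * τ ^ (q + 1 + 1) / (Nat.factorial (q + 1 + 1) : ℝ) := by
    rw [hgdef]
    rw [intervalIntegral.integral_const_mul, hsplit]
    have hfq : ((Nat.factorial q : ℝ)) ≠ 0 := by positivity
    have hfact : (Nat.factorial (q + 1 + 1) : ℝ) =
        ((q:ℝ) + 2) * (((q:ℝ) + 1) * (Nat.factorial q : ℝ)) := by
      rw [Nat.factorial_succ, Nat.factorial_succ]
      push_cast; ring
    rw [hfact, div_mul_div_comm]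
    congr 1 <;> ring
  calc ‖∫ σ in (0:ℝ)..τ, ((τ - σ) ^ (q + 1 - 1) / (Nat.factorial (q + 1 - 1) : ℝ)) •
        (∫ s in (0:ℝ)..σ, P (S s (P (T (σ + Δt - s) v))))‖
      ≤ ∫ σ in (0:ℝ)..τ, g σ := hbound
    _ = C * τ ^ (q + 1 + 1) / (Nat.factorial (q + 1 + 1) : ℝ) := hgint
end

section
/- Let δ > 0, C > 0 and T > 0 be real constants, let n ≥ 1 be an integer, and let α₁, …, α_n be positive real numbers. For 1 ≤ p ≤ n+1 define X_p := δ·p!/(C·∏_{j=1}^{p−1} α_j) (so X₁ = δ/C). If α_p < (p+1)·X_p^{−1/p} for all 1 ≤ p ≤ n, then X_{p+1}^{1/(p+1)} > X_p^{1/p} for all 1 ≤ p ≤ n; equivalently, the memory lengths Δt_p := T − X_{p+1}^{1/(p+1)} form a sequence satisfying Δt_p < Δt_{p−1} for 2 ≤ p ≤ n, i.e. T − [δ·(p+1)!/(C·∏_{j=1}^{p} α_j)]^{1/(p+1)} < T − [δ·p!/(C·∏_{j=1}^{p−1} α_j)]^{1/p}. -/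
open scoped BigOperators

/-- **Uniform convergence of the Type-I FMA** (Corollary 3.9, arithmetic
content). With `X_p = δ p! / (C ∏_{j=1}^{p-1} α_j)`, the growth condition
`α_p < (p+1) X_p^{-1/p}` forces `X_{p+1}^{1/(p+1)} > X_p^{1/p}`; equivalently,
the threshold memory lengths `Δt_p = T - X_{p+1}^{1/(p+1)}` satisfy
`Δt_p < Δt_{p-1}`. -/
theorem mz_type1_FMA_memory_lengths_ordered
    (δ C T : ℝ) (hδ : 0 < δ) (hC : 0 < C) (hT : 0 < T)
    (n : ℕ) (hn : 1 ≤ n) (α : ℕ → ℝ)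
    (hαpos : ∀ j, 1 ≤ j → j ≤ n → 0 < α j)
    (X : ℕ → ℝ)
    (hX : ∀ p, 1 ≤ p →
      X p = δ * (Nat.factorial p : ℝ) / (C * ∏ j ∈ Finset.Icc 1 (p - 1), α j))
    (hcond : ∀ p, 1 ≤ p → p ≤ n → α p < ((p : ℝ) + 1) * X p ^ (-(1 : ℝ) / (p : ℝ)))
    (Δt : ℕ → ℝ)
    (hΔt : ∀ p, 1 ≤ p → Δt p = T - X (p + 1) ^ ((1 : ℝ) / ((p : ℝ) + 1))) :
    (∀ p, 1 ≤ p → p ≤ n →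
      X p ^ ((1 : ℝ) / (p : ℝ)) < X (p + 1) ^ ((1 : ℝ) / ((p : ℝ) + 1))) ∧
    (∀ p, 2 ≤ p → p ≤ n → Δt p < Δt (p - 1)) ∧
    (∀ p, 2 ≤ p → p ≤ n →
      T - (δ * (Nat.factorial (p + 1) : ℝ) /
            (C * ∏ j ∈ Finset.Icc 1 p, α j)) ^ ((1 : ℝ) / ((p : ℝ) + 1)) <
      T - (δ * (Nat.factorial p : ℝ) /
            (C * ∏ j ∈ Finset.Icc 1 (p - 1), α j)) ^ ((1 : ℝ) / (p : ℝ))) := by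
  have hXpos : ∀ p, 1 ≤ p → p ≤ n + 1 → 0 < X p := by
    intro p hp hpn
    rw [hX p hp]
    apply div_pos
    · have : (0:ℝ) < (Nat.factorial p : ℝ) := by
        exact_mod_cast Nat.factorial_pos p
      positivity
    · apply mul_pos hC
      apply Finset.prod_pos
      intro j hj
      simp only [Finset.mem_Icc] at hj
      exact hαpos j hj.1 (hj.2.trans (by omega))
  have key : ∀ p, 1 ≤ p → p ≤ n →
      X p ^ ((1 : ℝ) / (p : ℝ)) < X (p + 1) ^ ((1 : ℝ) / ((p : ℝ) + 1)) := by
    intro p hp hpn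
    have hXp := hXpos p hp (by omega)
    have hXp1 := hXpos (p + 1) (by omega) (by omega)
    have hα := hαpos p hp hpn
    have hp0 : (0:ℝ) < (p:ℝ) := by exact_mod_cast hp
    have hrec : X (p + 1) = X p * (((p : ℝ) + 1) / α p) := by
      rw [hX (p + 1) (by omega), hX p hp]
      obtain ⟨q, rfl⟩ : ∃ q, p = q + 1 := ⟨p - 1, by omega⟩
      have hIcc : (q + 1 + 1 - 1) = q + 1 := rfl
      rw [hIcc, Finset.prod_Icc_succ_top (by omega : 1 ≤ q + 1)]
      have hq1 : (q + 1 - 1) = q := rfl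
      rw [hq1, Nat.factorial_succ (q + 1)]
      have hprod : (0:ℝ) < ∏ j ∈ Finset.Icc 1 q, α j := by
        apply Finset.prod_pos
        intro j hj
        simp only [Finset.mem_Icc] at hj
        exact hαpos j hj.1 (by omega)
      push_cast
      field_simp
    have hy0 : 0 < X p ^ ((1:ℝ)/(p:ℝ)) := Real.rpow_pos_of_pos hXp _
    have hconv : X p ^ (-(1:ℝ)/(p:ℝ)) = (X p ^ ((1:ℝ)/(p:ℝ)))⁻¹ := by
      rw [neg_div, Real.rpow_neg hXp.le]
    have hstep : X p ^ ((1:ℝ)/(p:ℝ)) < ((p:ℝ) + 1) / α p := by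
      have h1 : α p < ((p:ℝ) + 1) * (X p ^ ((1:ℝ)/(p:ℝ)))⁻¹ := by
        rw [← hconv]; exact hcond p hp hpn
      have h2 := mul_lt_mul_of_pos_right h1 hy0
      rw [mul_assoc, inv_mul_cancel₀ hy0.ne', mul_one] at h2
      rw [lt_div_iff₀ hα]
      nlinarith [h2]
    have hgt : X p ^ (((p:ℝ) + 1) / (p:ℝ)) < X (p + 1) := by
      rw [hrec]
      have hsplit : X p ^ (((p:ℝ) + 1) / (p:ℝ)) = X p * X p ^ ((1:ℝ)/(p:ℝ)) := by
        rw [show ((p:ℝ) + 1) / (p:ℝ) = 1 + 1/(p:ℝ) by field_simp,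
          Real.rpow_add hXp, Real.rpow_one]
      rw [hsplit]
      exact mul_lt_mul_of_pos_left hstep hXp
    calc X p ^ ((1:ℝ)/(p:ℝ))
        = (X p ^ (((p:ℝ) + 1) / (p:ℝ))) ^ ((1:ℝ)/((p:ℝ)+1)) := by
          rw [← Real.rpow_mul hXp.le]
          congr 1
          field_simp
      _ < X (p + 1) ^ ((1:ℝ)/((p:ℝ)+1)) :=
          Real.rpow_lt_rpow (Real.rpow_pos_of_pos hXp _).le hgt (by positivity)
  refine ⟨key, ?_, ?_⟩
  · intro p hp2 hpn
    obtain ⟨q, rfl⟩ : ∃ q, p = q + 1 := ⟨p - 1, by omega⟩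
    have hq1 : q + 1 - 1 = q := rfl
    rw [hΔt (q + 1) (by omega), hq1, hΔt q (by omega)]
    have h := key (q + 1) (by omega) hpn
    push_cast at h ⊢
    linarith [h]
  · intro p hp2 hpn
    have h := key p (by omega) hpn
    rw [hX p (by omega), hX (p + 1) (by omega)] at h
    have hq1 : p + 1 - 1 = p := rfl
    rw [hq1] at h
    linarith [h]
end

section
/- Let E be a real Banach space, P : E → E a continuous linear map, S, T : ℝ → (E → E) two families of continuous linear operators such that for every x ∈ E the maps t ↦ S(t)x and t ↦ T(t)x are continuous, and suppose there are constants M, M_Q > 0 and ω, ω_Q ∈ ℝ with ‖S(t)‖ ≤ M·exp(ω·t) and ‖T(t)‖ ≤ M_Q·exp(ω_Q·t) for all t ≥ 0. Fix an integer p ≥ 1 and a cutoff time t_p ≥ 0. Then for every v ∈ E and every t ≥ 0, the error of the Type-II finite memory approximation satisfies ‖∫₀ᵗ ((t−σ)^{p−1}/(p−1)!) · (∫₀^{min(σ, t_p)} P(S(s)(P(T(σ−s)v))) ds) dσ‖ ≤ M·M_Q·‖P‖²·‖v‖·f_p(ω_Q, t)·h(ω − ω_Q, t_p), where f_p(ω_Q,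 t) = ∫₀ᵗ ((t−σ)^{p−1}/(p−1)!)·exp(ω_Q·σ) dσ and h(a, τ) = ∫₀^τ exp(a·s) ds (so h(a, τ) = τ if a = 0 and h(a, τ) = (exp(a·τ) − 1)/a if a ≠ 0). -/
open MeasureTheory intervalIntegral Filter

set_option maxHeartbeats 1000000 in
/-- **Accuracy of the Type-II finite memory approximation** (Theorem 3.10,
abstract form). Bound on the error of the Type-II FMA of the Mori–Zwanzig
memory integral, in terms of `f_p(ωQ,t) = ∫₀ᵗ (t-σ)^{p-1}/(p-1)! e^{ωQ σ} dσ`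
and `h(a,τ) = ∫₀^τ e^{a s} ds`. -/
theorem mz_type2_FMA_accuracy
    {E : Type*} [NormedAddCommGroup E] [NormedSpace ℝ E] [CompleteSpace E]
    (P : E →L[ℝ] E) (S T : ℝ → (E →L[ℝ] E))
    (hScont : ∀ x : E, Continuous fun t : ℝ => S t x)
    (hTcont : ∀ x : E, Continuous fun t : ℝ => T t x)
    (M MQ : ℝ) (hM : 0 < M) (hMQ : 0 < MQ) (ω ωQ : ℝ)
    (hS : ∀ t : ℝ, 0 ≤ t → ‖S t‖ ≤ M * Real.exp (ω * t))
    (hT : ∀ t : ℝ, 0 ≤ t → ‖T t‖ ≤ MQ * Real.exp (ωQ * t))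
    (p : ℕ) (hp : 1 ≤ p) (tp : ℝ) (htp : 0 ≤ tp)
    (v : E) (t : ℝ) (ht : 0 ≤ t) :
    ‖∫ σ in (0:ℝ)..t, ((t - σ) ^ (p - 1) / (Nat.factorial (p - 1) : ℝ)) •
        (∫ s in (0:ℝ)..(min σ tp), P (S s (P (T (σ - s) v))))‖ ≤
      M * MQ * ‖P‖ ^ 2 * ‖v‖ *
        (∫ σ in (0:ℝ)..t, (t - σ) ^ (p - 1) / (Nat.factorial (p - 1) : ℝ) *
          Real.exp (ωQ * σ)) *
        (∫ s in (0:ℝ)..tp, Real.exp ((ω - ωQ) * s)) := by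
  set C : ℝ := M * MQ * ‖P‖ ^ 2 * ‖v‖ with hC
  have hC0 : 0 ≤ C := by positivity
  set H : ℝ := ∫ s in (0:ℝ)..tp, Real.exp ((ω - ωQ) * s) with hH
  have hH0 : 0 ≤ H := intervalIntegral.integral_nonneg htp (fun s _ => (Real.exp_pos _).le)
  have hHint : IntervalIntegrable (fun s => Real.exp ((ω - ωQ) * s)) volume 0 tp :=
    (by fun_prop : Continuous fun s : ℝ => Real.exp ((ω - ωQ) * s)).intervalIntegrable _ _
  -- Inner bound
  have inner_bound : ∀ σ : ℝ, 0 < σ → σ ≤ t →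
      ‖∫ s in (0:ℝ)..(min σ tp), P (S s (P (T (σ - s) v)))‖ ≤
        C * Real.exp (ωQ * σ) * H := by
    intro σ hσ0 hσt
    set m : ℝ := min σ tp with hm
    have hm0 : 0 ≤ m := le_min hσ0.le htp
    have step1 : ‖∫ s in (0:ℝ)..m, P (S s (P (T (σ - s) v)))‖ ≤
        |∫ s in (0:ℝ)..m, C * Real.exp (ωQ * σ) * Real.exp ((ω - ωQ) * s)| := by
      apply intervalIntegral.norm_integral_le_abs_of_norm_le
      · filter_upwards [ae_restrict_mem measurableSet_uIoc] with s hs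
        rw [Set.uIoc_of_le hm0] at hs
        have hs0 : 0 ≤ s := hs.1.le
        have hsm : s ≤ σ := hs.2.trans (min_le_left _ _)
        have h1 : ‖P (S s (P (T (σ - s) v)))‖ ≤
            ‖P‖ * (M * Real.exp (ω * s)) * (‖P‖ * (MQ * Real.exp (ωQ * (σ - s)) * ‖v‖)) := by
          calc ‖P (S s (P (T (σ - s) v)))‖ ≤ ‖P‖ * ‖S s (P (T (σ - s) v))‖ :=
                P.le_opNorm _
            _ ≤ ‖P‖ * (‖S s‖ * ‖P (T (σ - s) v)‖) := by
                gcongr; exact (S s).le_opNorm _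
            _ ≤ ‖P‖ * ((M * Real.exp (ω * s)) * (‖P‖ * ‖T (σ - s) v‖)) := by
                gcongr
                · exact hS s hs0
                · exact P.le_opNorm _
            _ ≤ ‖P‖ * ((M * Real.exp (ω * s)) * (‖P‖ * (‖T (σ - s)‖ * ‖v‖))) := by
                gcongr; exact (T _).le_opNorm _
            _ ≤ ‖P‖ * ((M * Real.exp (ω * s)) * (‖P‖ * (MQ * Real.exp (ωQ * (σ - s)) * ‖v‖))) := by
                gcongr; exact hT _ (by linarith)
            _ = ‖P‖ * (M * Real.exp (ω * s)) * (‖P‖ * (MQ * Real.exp (ωQ * (σ - s)) * ‖v‖)) := by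
                ring
        refine h1.trans (le_of_eq ?_)
        have he : Real.exp (ω * s) * Real.exp (ωQ * (σ - s)) =
            Real.exp (ωQ * σ) * Real.exp ((ω - ωQ) * s) := by
          rw [← Real.exp_add, ← Real.exp_add]; congr 1; ring
        rw [hC]
        linear_combination (M * MQ * ‖P‖ ^ 2 * ‖v‖) * he
      · exact (by fun_prop :
          Continuous fun s : ℝ =>
            C * Real.exp (ωQ * σ) * Real.exp ((ω - ωQ) * s)).intervalIntegrable _ _
    have step2 : |∫ s in (0:ℝ)..m, C * Real.exp (ωQ * σ) * Real.exp ((ω - ωQ) * s)| =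
        C * Real.exp (ωQ * σ) * ∫ s in (0:ℝ)..m, Real.exp ((ω - ωQ) * s) := by
      rw [intervalIntegral.integral_const_mul, abs_of_nonneg]
      exact mul_nonneg (by positivity)
        (intervalIntegral.integral_nonneg hm0 (fun s _ => (Real.exp_pos _).le))
    have step3 : (∫ s in (0:ℝ)..m, Real.exp ((ω - ωQ) * s)) ≤ H := by
      apply intervalIntegral.integral_mono_interval le_rfl hm0 (min_le_right _ _)
      · filter_upwards with s using (Real.exp_pos _).le
      · exact hHint
    calc ‖∫ s in (0:ℝ)..m, P (S s (P (T (σ - s) v)))‖ ≤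
          C * Real.exp (ωQ * σ) * ∫ s in (0:ℝ)..m, Real.exp ((ω - ωQ) * s) :=
        step1.trans_eq step2
      _ ≤ C * Real.exp (ωQ * σ) * H := by
          exact mul_le_mul_of_nonneg_left step3 (by positivity)
  -- Outer bound
  have outer : ‖∫ σ in (0:ℝ)..t, ((t - σ) ^ (p - 1) / (Nat.factorial (p - 1) : ℝ)) •
        (∫ s in (0:ℝ)..(min σ tp), P (S s (P (T (σ - s) v))))‖ ≤
      |∫ σ in (0:ℝ)..t, (t - σ) ^ (p - 1) / (Nat.factorial (p - 1) : ℝ) *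
          (C * Real.exp (ωQ * σ) * H)| := by
    apply intervalIntegral.norm_integral_le_abs_of_norm_le
    · filter_upwards [ae_restrict_mem measurableSet_uIoc] with σ hσ
      rw [Set.uIoc_of_le ht] at hσ
      have hg0 : 0 ≤ (t - σ) ^ (p - 1) / (Nat.factorial (p - 1) : ℝ) := by
        apply div_nonneg _ (Nat.cast_nonneg _)
        exact pow_nonneg (by linarith [hσ.2]) _
      rw [norm_smul, Real.norm_eq_abs, abs_of_nonneg hg0]
      exact mul_le_mul_of_nonneg_left (inner_bound σ hσ.1 hσ.2) hg0
    · exact (by fun_prop :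
        Continuous fun σ : ℝ => (t - σ) ^ (p - 1) / (Nat.factorial (p - 1) : ℝ) *
          (C * Real.exp (ωQ * σ) * H)).intervalIntegrable _ _
  refine outer.trans (le_of_eq ?_)
  have : (∫ σ in (0:ℝ)..t, (t - σ) ^ (p - 1) / (Nat.factorial (p - 1) : ℝ) *
      (C * Real.exp (ωQ * σ) * H)) =
      (C * H) * ∫ σ in (0:ℝ)..t, (t - σ) ^ (p - 1) / (Nat.factorial (p - 1) : ℝ) *
        Real.exp (ωQ * σ) := by
    rw [← intervalIntegral.integral_const_mul]
    congr 1; ext σ; ring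
  rw [this, abs_of_nonneg, hC, hH]; · ring
  refine mul_nonneg (by positivity) ?_
  apply intervalIntegral.integral_nonneg ht
  intro σ hσ
  apply mul_nonneg _ (Real.exp_pos _).le
  apply div_nonneg _ (Nat.cast_nonneg _)
  exact pow_nonneg (by linarith [hσ.2]) _
end

section
/- Let E be a real Banach space, P : E → E a continuous linear map, S, T : ℝ → (E → E) two families of continuous linear operators such that for every x ∈ E the maps t ↦ S(t)x and t ↦ T(t)x are continuous, and suppose there are constants M, M_Q > 0 and ω, ω_Q ∈ ℝ with ‖S(t)‖ ≤ M·exp(ω·t) and ‖T(t)‖ ≤ M_Q·exp(ω_Q·t) for all t ≥ 0. Fix T > 0 and an integer p ≥ 1, and set A₁ = max(1, exp(T·(ω − ω_Q))), A₂ = max(1, exp(T·ω_Q)), A₃ = max(1, exp(T·ω)). Then for every v ∈ E and every t with 0 ≤ t ≤ T, the error of the p-th order H_t-model satisfies ‖∫₀ᵗ ((t−σ)^{p−1}/(p−1)!) · (∫₀^σ P(S(s)(P(T(σ−s)v))) ds − σ·P(S(σ)(P v))) dσ‖ ≤ (C₁·A₁·A₂ + (C₁/M_Q)·A₃)·t^{p+1}/(p+1)!,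 where C₁ = M·M_Q·‖P‖²·‖v‖. -/
open MeasureTheory intervalIntegral Filter

private lemma exp_le_max_aux {c s Tf : ℝ} (hs : 0 ≤ s) (h : s ≤ Tf) :
    Real.exp (c * s) ≤ max 1 (Real.exp (Tf * c)) := by
  rcases le_or_gt c 0 with hc | hc
  · exact le_max_of_le_left (Real.exp_le_one_iff.mpr (mul_nonpos_of_nonpos_of_nonneg hc hs))
  · exact le_max_of_le_right (Real.exp_le_exp.mpr (by nlinarith))

/-- **Accuracy of the `H_t`-model** (Theorem 3.12, abstract form). Bound on the
p-th order `H_t`-model error of the Mori–Zwanzig memory integral, written via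
Cauchy's formula for repeated integration: the `p`-th level memory integral is
replaced by the classical t-model `σ • P S(σ) P v`. -/
theorem mz_Ht_model_accuracy
    {E : Type*} [NormedAddCommGroup E] [NormedSpace ℝ E] [CompleteSpace E]
    (P : E →L[ℝ] E) (S T : ℝ → (E →L[ℝ] E))
    (hScont : ∀ x : E, Continuous fun t : ℝ => S t x)
    (hTcont : ∀ x : E, Continuous fun t : ℝ => T t x)
    (M MQ : ℝ) (hM : 0 < M) (hMQ : 0 < MQ) (ω ωQ : ℝ)
    (hS : ∀ t : ℝ, 0 ≤ t → ‖S t‖ ≤ M * Real.exp (ω * t))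
    (hT : ∀ t : ℝ, 0 ≤ t → ‖T t‖ ≤ MQ * Real.exp (ωQ * t))
    (Tf : ℝ) (hTf : 0 < Tf) (p : ℕ) (hp : 1 ≤ p)
    (A₁ A₂ A₃ : ℝ) (hA₁ : A₁ = max 1 (Real.exp (Tf * (ω - ωQ))))
    (hA₂ : A₂ = max 1 (Real.exp (Tf * ωQ)))
    (hA₃ : A₃ = max 1 (Real.exp (Tf * ω)))
    (v : E) (t : ℝ) (ht0 : 0 ≤ t) (htT : t ≤ Tf) :
    ‖∫ σ in (0:ℝ)..t, ((t - σ) ^ (p - 1) / (Nat.factorial (p - 1) : ℝ)) •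
        ((∫ s in (0:ℝ)..σ, P (S s (P (T (σ - s) v)))) - σ • P (S σ (P v)))‖ ≤
      ((M * MQ * ‖P‖ ^ 2 * ‖v‖) * A₁ * A₂ + (M * MQ * ‖P‖ ^ 2 * ‖v‖) / MQ * A₃) *
        t ^ (p + 1) / (Nat.factorial (p + 1) : ℝ) := by
  obtain ⟨q, rfl⟩ : ∃ q, p = q + 1 := ⟨p - 1, (Nat.succ_pred_eq_of_pos hp).symm⟩
  simp only [Nat.add_sub_cancel]
  set C : ℝ := M * MQ * ‖P‖ ^ 2 * ‖v‖ with hC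
  set K : ℝ := C * A₁ * A₂ + C / MQ * A₃ with hK
  have hA₁1 : (1:ℝ) ≤ A₁ := hA₁ ▸ le_max_left _ _
  have hA₂1 : (1:ℝ) ≤ A₂ := hA₂ ▸ le_max_left _ _
  have hA₃1 : (1:ℝ) ≤ A₃ := hA₃ ▸ le_max_left _ _
  have hC0 : 0 ≤ C := by positivity
  have hK0 : 0 ≤ K := by
    have h1 : 0 ≤ C / MQ := by positivity
    exact add_nonneg (mul_nonneg (mul_nonneg hC0 (by linarith)) (by linarith))
      (mul_nonneg h1 (by linarith))
  -- pointwise bound on the difference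
  have hbound : ∀ σ ∈ Set.Ioc (0:ℝ) t,
      ‖((t - σ) ^ q / (Nat.factorial q : ℝ)) •
        ((∫ s in (0:ℝ)..σ, P (S s (P (T (σ - s) v)))) - σ • P (S σ (P v)))‖ ≤
      (t - σ) ^ q / (Nat.factorial q : ℝ) * (K * σ) := by
    intro σ hσ
    obtain ⟨hσ0, hσt⟩ := hσ
    have hσTf : σ ≤ Tf := hσt.trans htT
    -- bound on the inner integral
    have hI : ‖∫ s in (0:ℝ)..σ, P (S s (P (T (σ - s) v)))‖ ≤ C * A₁ * A₂ * σ := by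
      have hconst : ∀ s ∈ Set.uIoc (0:ℝ) σ, ‖P (S s (P (T (σ - s) v)))‖ ≤ C * A₁ * A₂ := by
        intro s hs
        rw [Set.uIoc_of_le hσ0.le] at hs
        obtain ⟨hs0, hsσ⟩ := hs
        have hσs : 0 ≤ σ - s := by linarith
        have b1 : ‖T (σ - s) v‖ ≤ MQ * Real.exp (ωQ * (σ - s)) * ‖v‖ :=
          ((T _).le_opNorm v).trans
            (mul_le_mul_of_nonneg_right (hT _ hσs) (norm_nonneg v))
        have b2 : ‖P (T (σ - s) v)‖ ≤ ‖P‖ * (MQ * Real.exp (ωQ * (σ - s)) * ‖v‖) :=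
          (P.le_opNorm _).trans (mul_le_mul_of_nonneg_left b1 (norm_nonneg P))
        have b3 : ‖S s (P (T (σ - s) v))‖ ≤
            M * Real.exp (ω * s) * (‖P‖ * (MQ * Real.exp (ωQ * (σ - s)) * ‖v‖)) :=
          ((S s).le_opNorm _).trans
            (mul_le_mul (hS _ hs0.le) b2 (norm_nonneg _) (by positivity))
        have b4 : ‖P (S s (P (T (σ - s) v)))‖ ≤
            ‖P‖ * (M * Real.exp (ω * s) * (‖P‖ * (MQ * Real.exp (ωQ * (σ - s)) * ‖v‖))) :=
          (P.le_opNorm _).trans (mul_le_mul_of_nonneg_left b3 (norm_nonneg P))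
        have e1 : Real.exp ((ω - ωQ) * s) ≤ A₁ := hA₁ ▸ exp_le_max_aux hs0.le (hsσ.trans hσTf)
        have e2 : Real.exp (ωQ * σ) ≤ A₂ := hA₂ ▸ exp_le_max_aux hσ0.le hσTf
        have key : Real.exp (ω * s) * Real.exp (ωQ * (σ - s)) ≤ A₁ * A₂ := by
          calc Real.exp (ω * s) * Real.exp (ωQ * (σ - s))
              = Real.exp ((ω - ωQ) * s) * Real.exp (ωQ * σ) := by
                rw [← Real.exp_add, ← Real.exp_add]; ring_nf
            _ ≤ A₁ * A₂ :=
                mul_le_mul e1 e2 (Real.exp_pos _).le (by linarith)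
        calc ‖P (S s (P (T (σ - s) v)))‖
            ≤ ‖P‖ * (M * Real.exp (ω * s) * (‖P‖ * (MQ * Real.exp (ωQ * (σ - s)) * ‖v‖))) := b4
          _ = C * (Real.exp (ω * s) * Real.exp (ωQ * (σ - s))) := by rw [hC]; ring
          _ ≤ C * (A₁ * A₂) := mul_le_mul_of_nonneg_left key hC0
          _ = C * A₁ * A₂ := by ring
      calc ‖∫ s in (0:ℝ)..σ, P (S s (P (T (σ - s) v)))‖
          ≤ C * A₁ * A₂ * |σ - 0| := intervalIntegral.norm_integral_le_of_norm_le_const hconst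
        _ = C * A₁ * A₂ * σ := by rw [sub_zero, abs_of_pos hσ0]
    -- bound on the t-model term
    have hII : ‖σ • P (S σ (P v))‖ ≤ C / MQ * A₃ * σ := by
      have b2 : ‖S σ (P v)‖ ≤ M * Real.exp (ω * σ) * (‖P‖ * ‖v‖) :=
        ((S σ).le_opNorm _).trans
          (mul_le_mul (hS _ hσ0.le) (P.le_opNorm v) (norm_nonneg _) (by positivity))
      have b3 : ‖P (S σ (P v))‖ ≤ ‖P‖ * (M * Real.exp (ω * σ) * (‖P‖ * ‖v‖)) :=
        (P.le_opNorm _).trans (mul_le_mul_of_nonneg_left b2 (norm_nonneg P))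
      have e3 : Real.exp (ω * σ) ≤ A₃ := hA₃ ▸ exp_le_max_aux hσ0.le hσTf
      have : ‖P (S σ (P v))‖ ≤ C / MQ * A₃ := by
        calc ‖P (S σ (P v))‖ ≤ ‖P‖ * (M * Real.exp (ω * σ) * (‖P‖ * ‖v‖)) := b3
          _ = (M * ‖P‖ ^ 2 * ‖v‖) * Real.exp (ω * σ) := by ring
          _ ≤ (M * ‖P‖ ^ 2 * ‖v‖) * A₃ := mul_le_mul_of_nonneg_left e3 (by positivity)
          _ = C / MQ * A₃ := by rw [hC]; field_simp
      calc ‖σ • P (S σ (P v))‖ = σ * ‖P (S σ (P v))‖ := by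
            rw [norm_smul, Real.norm_eq_abs, abs_of_pos hσ0]
        _ ≤ σ * (C / MQ * A₃) := mul_le_mul_of_nonneg_left this hσ0.le
        _ = C / MQ * A₃ * σ := by ring
    have hD : ‖(∫ s in (0:ℝ)..σ, P (S s (P (T (σ - s) v)))) - σ • P (S σ (P v))‖ ≤ K * σ := by
      calc ‖(∫ s in (0:ℝ)..σ, P (S s (P (T (σ - s) v)))) - σ • P (S σ (P v))‖
          ≤ ‖∫ s in (0:ℝ)..σ, P (S s (P (T (σ - s) v)))‖ + ‖σ • P (S σ (P v))‖ :=
            norm_sub_le _ _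
        _ ≤ C * A₁ * A₂ * σ + C / MQ * A₃ * σ := add_le_add hI hII
        _ = K * σ := by rw [hK]; ring
    have hw : 0 ≤ (t - σ) ^ q / (Nat.factorial q : ℝ) := by
      have : 0 ≤ t - σ := by linarith
      positivity
    rw [norm_smul, Real.norm_eq_abs, abs_of_nonneg hw]
    exact mul_le_mul_of_nonneg_left hD hw
  -- the dominating function
  have hgint : IntervalIntegrable
      (fun σ : ℝ => (t - σ) ^ q / (Nat.factorial q : ℝ) * (K * σ)) volume 0 t :=
    (((((continuous_const.sub continuous_id).pow q).div_const _).mul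
      (continuous_const.mul continuous_id)).intervalIntegrable 0 t)
  have hmain := intervalIntegral.norm_integral_le_abs_of_norm_le (μ := volume)
    (f := fun σ : ℝ => ((t - σ) ^ q / (Nat.factorial q : ℝ)) •
        ((∫ s in (0:ℝ)..σ, P (S s (P (T (σ - s) v)))) - σ • P (S σ (P v))))
    (a := 0) (b := t)
    (by
      refine (ae_restrict_iff' measurableSet_uIoc).mpr (ae_of_all _ ?_)
      intro σ hσ
      rw [Set.uIoc_of_le ht0] at hσ
      exact hbound σ hσ) hgint
  refine hmain.trans ?_
  -- compute the dominating integral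
  have hq1 : ((q:ℝ) + 1) ≠ 0 := by positivity
  have hq2 : ((q:ℝ) + 2) ≠ 0 := by positivity
  have hqf : ((Nat.factorial q : ℝ)) ≠ 0 := Nat.cast_ne_zero.mpr q.factorial_ne_zero
  have hJ : (∫ σ in (0:ℝ)..t, (t - σ) ^ q * σ) =
      t * (t ^ (q + 1) / (q + 1)) - t ^ (q + 2) / (q + 2) := by
    have h1 : (∫ σ in (0:ℝ)..t, (t - σ) ^ q * σ) = ∫ u in (0:ℝ)..t, u ^ q * (t - u) := by
      have h := intervalIntegral.integral_comp_sub_left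
        (a := (0:ℝ)) (b := t) (fun u : ℝ => u ^ q * (t - u)) t
      simp only [sub_zero, sub_self] at h
      rw [← h]
      congr 1
      funext σ
      ring
    rw [h1]
    have h2 : (∫ u in (0:ℝ)..t, u ^ q * (t - u)) =
        (∫ u in (0:ℝ)..t, t * u ^ q) - ∫ u in (0:ℝ)..t, u ^ (q + 1) := by
      rw [← intervalIntegral.integral_sub (f := fun u : ℝ => t * u ^ q) (g := fun u : ℝ => u ^ (q + 1))
        ((continuous_const.mul (continuous_pow q)).intervalIntegrable _ _)
        ((continuous_pow (q + 1)).intervalIntegrable _ _)]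
      congr 1
      funext u
      ring
    rw [h2, intervalIntegral.integral_const_mul, integral_pow, integral_pow]
    push_cast
    ring_nf
  have hcalc : (∫ σ in (0:ℝ)..t, (t - σ) ^ q / (Nat.factorial q : ℝ) * (K * σ)) =
      K * t ^ (q + 1 + 1) / (Nat.factorial (q + 1 + 1) : ℝ) := by
    have h3 : (fun σ : ℝ => (t - σ) ^ q / (Nat.factorial q : ℝ) * (K * σ)) =
        fun σ : ℝ => (K / (Nat.factorial q : ℝ)) * ((t - σ) ^ q * σ) := by
      funext σ; ring
    rw [h3, intervalIntegral.integral_const_mul, hJ]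
    have hfac : (Nat.factorial (q + 1 + 1) : ℝ) =
        ((q:ℝ) + 2) * ((q:ℝ) + 1) * (Nat.factorial q : ℝ) := by
      rw [Nat.factorial_succ, Nat.factorial_succ]
      push_cast
      ring
    rw [hfac]
    field_simp
    ring
  rw [hcalc, abs_of_nonneg (by positivity)]
end

section
/- Let H be a complex Hilbert space, A : H → H a continuous linear operator, and ω ∈ ℝ a constant such that the real part of ⟪u, A u⟫ is at most ω·‖u‖² for every u ∈ H (i.e., ω bounds the numerical abscissa of A). Then for every t ≥ 0 one has ‖exp(t·A)‖ ≤ exp(ω·t). -/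
open NormedSpace

/-- Contraction semigroup from dissipativity: pointwise bound. -/
lemma contraction_of_dissipative
    {H : Type*} [NormedAddCommGroup H] [InnerProductSpace ℂ H] [CompleteSpace H]
    (B : H →L[ℂ] H)
    (hB : ∀ u : H, (inner ℂ u (B u) : ℂ).re ≤ 0)
    (s : ℝ) (hs : 0 ≤ s) (u : H) :
    ‖NormedSpace.exp ((s : ℂ) • B) u‖ ≤ ‖u‖ := by
  set f : ℝ → H := fun r => NormedSpace.exp ((r : ℂ) • B) u with hf_def
  have hE : ∀ r : ℝ, HasDerivAt (fun r : ℝ => NormedSpace.exp ((r : ℂ) • B))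
      (B * NormedSpace.exp ((r : ℂ) • B)) r := by
    intro r
    have h1 := hasDerivAt_exp_smul_const' (𝕂 := ℂ) B (r : ℂ)
    have h2 : HasDerivAt (fun y : ℝ => (y : ℂ)) 1 r := Complex.ofRealCLM.hasDerivAt
    simpa [Function.comp_def] using HasDerivAt.scomp (𝕜 := ℝ) (𝕜' := ℂ) r h1 h2
  have hf : ∀ r : ℝ, HasDerivAt f (B (f r)) r := by
    intro r
    have := ((ContinuousLinearMap.apply ℂ H u).restrictScalars
        ℝ).hasFDerivAt.comp_hasDerivAt r (hE r)
    simpa [ContinuousLinearMap.mul_apply, Function.comp_def, hf_def] using this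
  set g : ℝ → ℝ := fun r => ((inner ℂ (f r) (f r) : ℂ)).re with hg_def
  have hg : ∀ r : ℝ, HasDerivAt g
      (((inner ℂ (f r) (B (f r)) : ℂ) + (inner ℂ (B (f r)) (f r) : ℂ)).re) r := by
    intro r
    exact (Complex.reCLM.hasFDerivAt.comp_hasDerivAt r
      (HasDerivAt.inner ℂ (hf r) (hf r)))
  have hg_nonpos : ∀ r : ℝ, ((inner ℂ (f r) (B (f r)) : ℂ) + (inner ℂ (B (f r)) (f r) : ℂ)).re ≤ 0 := by
    intro r
    have h1 := hB (f r)
    have h2 : (inner ℂ (B (f r)) (f r) : ℂ) = starRingEnd ℂ (inner ℂ (f r) (B (f r))) :=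
      (inner_conj_symm _ _).symm
    rw [Complex.add_re, h2, Complex.conj_re]
    linarith
  have hdiff : Differentiable ℝ g := fun r => (hg r).differentiableAt
  have hanti : AntitoneOn g (Set.univ : Set ℝ) := by
    apply antitoneOn_of_deriv_nonpos convex_univ hdiff.continuous.continuousOn
    · intro r _
      exact (hdiff r).differentiableWithinAt
    · intro r _
      rw [(hg r).deriv]
      exact hg_nonpos r
  have key : g s ≤ g 0 := hanti (Set.mem_univ 0) (Set.mem_univ s) hs
  have hre : ∀ x : H, ((inner ℂ x x : ℂ)).re = ‖x‖ ^ 2 := by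
    intro x
    have := inner_self_eq_norm_sq (𝕜 := ℂ) x
    simpa [RCLike.re_to_complex] using this
  have hg0 : g 0 = ‖u‖ ^ 2 := by
    simp only [hg_def, hf_def, Complex.ofReal_zero, zero_smul, NormedSpace.exp_zero,
      ContinuousLinearMap.one_apply]
    exact hre u
  have hgs : g s = ‖f s‖ ^ 2 := hre (f s)
  rw [hgs, hg0] at key
  have h2 := Real.sqrt_le_sqrt key
  rwa [Real.sqrt_sq (norm_nonneg _), Real.sqrt_sq (norm_nonneg _)] at h2

/-- **Semigroup estimate via the numerical abscissa** (equation (19)). If the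
numerical abscissa of the bounded operator `A` is at most `ω`, i.e.
`Re⟪u, A u⟫ ≤ ω ‖u‖²` for all `u`, then `‖e^{tA}‖ ≤ e^{ωt}` for all `t ≥ 0`. -/
theorem semigroup_bound_of_numerical_abscissa
    {H : Type*} [NormedAddCommGroup H] [InnerProductSpace ℂ H] [CompleteSpace H]
    (A : H →L[ℂ] H) (ω : ℝ)
    (hω : ∀ u : H, (inner ℂ u (A u) : ℂ).re ≤ ω * ‖u‖ ^ 2)
    (t : ℝ) (ht : 0 ≤ t) :
    ‖NormedSpace.exp ((t : ℂ) • A)‖ ≤ Real.exp (ω * t) := by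
  set B : H →L[ℂ] H := A - (ω : ℂ) • (1 : H →L[ℂ] H) with hB_def
  have hB : ∀ u : H, (inner ℂ u (B u) : ℂ).re ≤ 0 := by
    intro u
    have : (inner ℂ u (B u) : ℂ) = (inner ℂ u (A u) : ℂ) - (ω : ℂ) * (inner ℂ u u : ℂ) := by
      simp only [hB_def, ContinuousLinearMap.sub_apply, ContinuousLinearMap.smul_apply,
        ContinuousLinearMap.one_apply, inner_sub_right, inner_smul_right]
    rw [this]
    have huu : (inner ℂ u u : ℂ) = ((‖u‖ : ℂ)) ^ 2 := inner_self_eq_norm_sq_to_K u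
    rw [huu]
    have := hω u
    simp only [Complex.sub_re, ← Complex.ofReal_pow, ← Complex.ofReal_mul, Complex.ofReal_re]
    linarith
  have hsplit : (t : ℂ) • A = (t : ℂ) • B + algebraMap ℂ (H →L[ℂ] H) ((t : ℂ) * ω) := by
    simp only [hB_def, smul_sub, Algebra.algebraMap_eq_smul_one, smul_smul]
    abel
  have hcomm : Commute ((t : ℂ) • B) (algebraMap ℂ (H →L[ℂ] H) ((t : ℂ) * ω)) :=
    (Algebra.commutes' _ _).symm
  letI : NormedAlgebra ℚ (H →L[ℂ] H) := NormedAlgebra.restrictScalars ℚ ℂ _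
  rw [hsplit, NormedSpace.exp_add_of_commute hcomm]
  have hmap : NormedSpace.exp (algebraMap ℂ (H →L[ℂ] H) ((t : ℂ) * ω)) =
      algebraMap ℂ (H →L[ℂ] H) (NormedSpace.exp ((t : ℂ) * ω)) :=
    (map_exp (algebraMap ℂ (H →L[ℂ] H)) (continuous_algebraMap ℂ _) _).symm
  rw [hmap]
  have h1 : ‖NormedSpace.exp ((t : ℂ) • B)‖ ≤ 1 :=
    ContinuousLinearMap.opNorm_le_bound _ zero_le_one
      (fun u => by simpa using contraction_of_dissipative B hB t ht u)
  have h2 : ‖algebraMap ℂ (H →L[ℂ] H) (NormedSpace.exp ((t : ℂ) * ω))‖ ≤ Real.exp (ω * t) := by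
    rw [Algebra.algebraMap_eq_smul_one, norm_smul]
    have hexp : NormedSpace.exp ((t : ℂ) * ω) = Complex.exp ((t : ℂ) * ω) := by
      rw [Complex.exp_eq_exp_ℂ]
    rw [hexp]
    have : ‖Complex.exp ((t : ℂ) * ω)‖ = Real.exp (t * ω) := by
      rw [← Complex.ofReal_mul, Complex.norm_exp, Complex.ofReal_re]
    rw [this, mul_comm t ω]
    calc Real.exp (ω * t) * ‖(1 : H →L[ℂ] H)‖ ≤ Real.exp (ω * t) * 1 := by
          exact mul_le_mul_of_nonneg_left ContinuousLinearMap.norm_id_le (Real.exp_nonneg _)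
      _ = Real.exp (ω * t) := mul_one _
  calc ‖NormedSpace.exp ((t : ℂ) • B) * algebraMap ℂ (H →L[ℂ] H) (NormedSpace.exp ((t : ℂ) * ω))‖
      ≤ ‖NormedSpace.exp ((t : ℂ) • B)‖ * ‖algebraMap ℂ (H →L[ℂ] H) (NormedSpace.exp ((t : ℂ) * ω))‖ := norm_mul_le _ _
    _ ≤ 1 * Real.exp (ω * t) := mul_le_mul h1 h2 (norm_nonneg _) zero_le_one
    _ = Real.exp (ω * t) := one_mul _
end

section
/- Let H be a complex Hilbert space, L : H → H a continuous linear operator that is skew-adjoint (its adjoint equals −L), and Q : H → H a continuous linear operator that is an orthogonal projection (Q is self-adjoint and Q ∘ Q = Q). Then the semigroup generated by Q ∘ L ∘ Q is contractive: for every t ≥ 0 one has ‖exp(t·(Q ∘ L ∘ Q))‖ ≤ 1. -/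
open ContinuousLinearMap

/-- **Contractivity of the orthogonal-dynamics semigroup** (equation (20) for
Hamiltonian systems). If `L` is skew-adjoint and `Q` is an orthogonal
projection, then the semigroup generated by `Q L Q` is contractive:
`‖e^{t QLQ}‖ ≤ 1` for all `t ≥ 0`. -/
theorem orthogonal_dynamics_semigroup_contractive
    {H : Type*} [NormedAddCommGroup H] [InnerProductSpace ℂ H] [CompleteSpace H]
    (L Q : H →L[ℂ] H)
    (hL : ContinuousLinearMap.adjoint L = -L)
    (hQadj : ContinuousLinearMap.adjoint Q = Q)
    (hQproj : Q ∘L Q = Q)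
    (t : ℝ) (ht : 0 ≤ t) :
    ‖NormedSpace.exp ((t : ℂ) • (Q ∘L L ∘L Q))‖ ≤ 1 := by
  set B := (t : ℂ) • (Q ∘L L ∘L Q) with hB
  have hBstar : star B = -B := by
    have hA : ContinuousLinearMap.adjoint (Q ∘L L ∘L Q) = -(Q ∘L L ∘L Q) := by
      rw [adjoint_comp, adjoint_comp, hL, hQadj]
      ext x; simp
    calc star B = (starRingEnd ℂ (t : ℂ)) • star (Q ∘L L ∘L Q) := by
          rw [hB, star_smul]; rfl
      _ = (t : ℂ) • (-(Q ∘L L ∘L Q)) := by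
          rw [Complex.conj_ofReal, star_eq_adjoint, hA]
      _ = -B := by rw [hB, smul_neg]
  have hmem : B ∈ skewAdjoint (H →L[ℂ] H) := skewAdjoint.mem_iff.mpr hBstar
  have hu : NormedSpace.exp B ∈ unitary (H →L[ℂ] H) :=
    let +nondep : NormedAlgebra ℚ (H →L[ℂ] H) := .restrictScalars ℚ ℂ (H →L[ℂ] H)
    NormedSpace.exp_mem_unitary_of_mem_skewAdjoint hmem
  rcases subsingleton_or_nontrivial H with h | h
  · have : NormedSpace.exp B = 0 := Subsingleton.elim _ _
    simp [this]
  · exact le_of_eq (CStarRing.norm_of_mem_unitary hu)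
end

section
/- Let H be a complex Hilbert space, L : H → H a continuous linear operator, P : H → H an orthogonal projection (self-adjoint with P ∘ P = P), Q := id − P, and ω ∈ ℝ a constant such that the real part of ⟪u, L u⟫ is at most ω·‖u‖² for every u ∈ H. Then for every x ∈ H, the real part of ⟪x, L(Q x)⟫ is at most (1/2)·(√(ω² + ‖P ∘ L ∘ Q‖²) + ω)·‖x‖². In particular the numerical abscissa of L ∘ Q is bounded by (1/2)(√(ω² + ‖PLQ‖²) + ω), so ‖exp(t·(L ∘ Q))‖ ≤ exp((1/2)(√(ω² + ‖PLQ‖²) + ω)·t) for t ≥ 0. -/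
open ContinuousLinearMap

private lemma quad_aux (ω b s t : ℝ) (hb : 0 ≤ b) :
    ω * s ^ 2 + b * (s * t) ≤ 1 / 2 * (Real.sqrt (ω ^ 2 + b ^ 2) + ω) * (s ^ 2 + t ^ 2) := by
  set r := Real.sqrt (ω ^ 2 + b ^ 2) with hr
  have hr0 : 0 ≤ r := Real.sqrt_nonneg _
  have hr2 : r ^ 2 = ω ^ 2 + b ^ 2 := Real.sq_sqrt (by positivity)
  have hrω : ω ≤ r := by nlinarith [sq_nonneg b, sq_nonneg (r - ω), sq_nonneg (r + ω)]
  have hrω' : 0 ≤ r + ω := by nlinarith [sq_nonneg b, sq_nonneg (r + ω)]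
  have h1 : Real.sqrt (r - ω) * Real.sqrt (r + ω) = b := by
    rw [← Real.sqrt_mul (by linarith)]
    have : (r - ω) * (r + ω) = b ^ 2 := by nlinarith
    rw [this, Real.sqrt_sq hb]
  have h2 : Real.sqrt (r - ω) ^ 2 = r - ω := Real.sq_sqrt (by linarith)
  have h3 : Real.sqrt (r + ω) ^ 2 = r + ω := Real.sq_sqrt hrω'
  have expand : (Real.sqrt (r - ω) * s - Real.sqrt (r + ω) * t) ^ 2
      = (r - ω) * s ^ 2 - 2 * b * (s * t) + (r + ω) * t ^ 2 := by
    have : (Real.sqrt (r - ω) * s - Real.sqrt (r + ω) * t) ^ 2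
        = Real.sqrt (r - ω) ^ 2 * s ^ 2
          - 2 * (Real.sqrt (r - ω) * Real.sqrt (r + ω)) * (s * t)
          + Real.sqrt (r + ω) ^ 2 * t ^ 2 := by ring
    rw [this, h1, h2, h3]
  have key : 0 ≤ (r - ω) * s ^ 2 - 2 * b * (s * t) + (r + ω) * t ^ 2 :=
    expand ▸ sq_nonneg _
  nlinarith [key]

private lemma exp_norm_bound {H : Type*} [NormedAddCommGroup H] [InnerProductSpace ℂ H]
    [CompleteSpace H] (A : H →L[ℂ] H) (c : ℝ)
    (hA : ∀ x : H, (inner ℂ x (A x) : ℂ).re ≤ c * ‖x‖ ^ 2) (t : ℝ) (ht : 0 ≤ t) :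
    ‖NormedSpace.exp ((t : ℂ) • A)‖ ≤ Real.exp (c * t) := by
  apply ContinuousLinearMap.opNorm_le_bound _ (Real.exp_nonneg _)
  intro x
  set f : ℝ → H := fun s : ℝ => (NormedSpace.exp ((s : ℂ) • A)) x with hfdef
  have hf : ∀ u : ℝ, HasDerivAt f (A (f u)) u := by
    intro u
    have h1 : HasDerivAt (fun z : ℂ => NormedSpace.exp (z • A))
        (A * NormedSpace.exp ((u : ℂ) • A)) (u : ℂ) :=
      hasDerivAt_exp_smul_const' A (u : ℂ)
    have h2 : HasDerivAt (fun s : ℝ => (s : ℂ)) 1 u := by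
      simpa using (hasDerivAt_id u).ofReal_comp
    have h3 := h1.scomp u h2
    rw [one_smul] at h3
    have h4 := ((ContinuousLinearMap.apply ℂ H x).restrictScalars ℝ).hasFDerivAt.comp_hasDerivAt u h3
    simpa [hfdef, Function.comp_def] using h4
  set n : ℝ → ℝ := fun u => (inner ℂ (f u) (f u) : ℂ).re with hndef
  have hn : ∀ u : ℝ, HasDerivAt n (2 * (inner ℂ (f u) (A (f u)) : ℂ).re) u := by
    intro u
    have h5 : HasDerivAt (fun s => (inner ℂ (f s) (f s) : ℂ))
        ((inner ℂ (f u) (A (f u)) : ℂ) + (inner ℂ (A (f u)) (f u) : ℂ)) u :=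
      (hf u).inner ℂ (hf u)
    have h6 := (Complex.reCLM.hasFDerivAt.comp_hasDerivAt u h5)
    have hconj : (inner ℂ (A (f u)) (f u) : ℂ)
        = starRingEnd ℂ (inner ℂ (f u) (A (f u)) : ℂ) := (inner_conj_symm _ _).symm
    have heq : ((inner ℂ (f u) (A (f u)) : ℂ) + (inner ℂ (A (f u)) (f u) : ℂ)).re
        = 2 * (inner ℂ (f u) (A (f u)) : ℂ).re := by
      rw [hconj, Complex.add_re, Complex.conj_re]; ring
    rw [← heq]; exact h6
  have hnval : ∀ u, n u = ‖f u‖ ^ 2 := by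
    intro u
    have := inner_self_eq_norm_sq (𝕜 := ℂ) (f u)
    rw [RCLike.re_to_complex] at this
    simpa [hndef] using this
  set F : ℝ → ℝ := fun u => Real.exp (-(2 * c) * u) * n u with hFdef
  have hF : ∀ u : ℝ, HasDerivAt F
      (-(2 * c) * Real.exp (-(2 * c) * u) * n u
        + Real.exp (-(2 * c) * u) * (2 * (inner ℂ (f u) (A (f u)) : ℂ).re)) u := by
    intro u
    have hexp : HasDerivAt (fun u : ℝ => Real.exp (-(2 * c) * u))
        (Real.exp (-(2 * c) * u) * (-(2 * c))) u :=
      by simpa using ((hasDerivAt_id u).const_mul (-(2 * c))).exp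
    have := hexp.mul (hn u)
    exact this.congr_deriv (by ring)
  have hderiv_nonpos : ∀ u : ℝ, deriv F u ≤ 0 := by
    intro u
    rw [(hF u).deriv]
    have h7 : (inner ℂ (f u) (A (f u)) : ℂ).re ≤ c * ‖f u‖ ^ 2 := hA (f u)
    have h8 : (0 : ℝ) < Real.exp (-(2 * c) * u) := Real.exp_pos _
    have h9 : n u = ‖f u‖ ^ 2 := hnval u
    have h12 : 2 * (inner ℂ (f u) (A (f u)) : ℂ).re ≤ 2 * c * n u := by
      rw [h9]; linarith
    nlinarith [mul_le_mul_of_nonneg_left h12 h8.le]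
  have hanti : Antitone F :=
    antitone_of_deriv_nonpos (fun u => (hF u).differentiableAt) hderiv_nonpos
  have hFt : F t ≤ F 0 := hanti ht
  have hF0 : F 0 = ‖x‖ ^ 2 := by
    simp [hFdef, hnval 0, hfdef, NormedSpace.exp_zero]
  have hkey : ‖f t‖ ^ 2 ≤ (Real.exp (c * t) * ‖x‖) ^ 2 := by
    have hE : Real.exp (-(2 * c) * t) * Real.exp (2 * c * t) = 1 := by
      rw [← Real.exp_add]; ring_nf; exact Real.exp_zero
    have h10 : Real.exp (-(2 * c) * t) * ‖f t‖ ^ 2 ≤ ‖x‖ ^ 2 := by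
      rw [← hnval t, ← hF0]; exact hFt
    have h11 : (Real.exp (c * t) * ‖x‖) ^ 2 = Real.exp (2 * c * t) * ‖x‖ ^ 2 := by
      rw [mul_pow, sq (Real.exp (c * t)), ← Real.exp_add]
      have : c * t + c * t = 2 * c * t := by ring
      rw [this]
    rw [h11]
    nlinarith [Real.exp_pos (-(2 * c) * t), Real.exp_pos (2 * c * t), sq_nonneg ‖f t‖]
  have := Real.sqrt_le_sqrt hkey
  rwa [Real.sqrt_sq (norm_nonneg _),
    Real.sqrt_sq (by positivity : (0:ℝ) ≤ Real.exp (c * t) * ‖x‖)] at this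

/-- **First computable bound on the numerical abscissa of `LQ`**
(equation (60a), Appendix A). If `P` is an orthogonal projection,
`Q = id − P`, and `Re⟪u, L u⟫ ≤ ω ‖u‖²` for all `u`, then the numerical
abscissa of `L ∘ Q` is at most `(√(ω² + ‖PLQ‖²) + ω)/2`, and consequently
`‖e^{t LQ}‖ ≤ e^{(√(ω² + ‖PLQ‖²) + ω) t / 2}` for `t ≥ 0`. -/
theorem LQ_numerical_abscissa_bound_decomposition
    {H : Type*} [NormedAddCommGroup H] [InnerProductSpace ℂ H] [CompleteSpace H]
    (L P : H →L[ℂ] H)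
    (hPadj : ContinuousLinearMap.adjoint P = P)
    (hPproj : P ∘L P = P)
    (Q : H →L[ℂ] H) (hQ : Q = ContinuousLinearMap.id ℂ H - P)
    (ω : ℝ) (hω : ∀ u : H, (inner ℂ u (L u) : ℂ).re ≤ ω * ‖u‖ ^ 2) :
    (∀ x : H, (inner ℂ x (L (Q x)) : ℂ).re ≤
        (1 / 2) * (Real.sqrt (ω ^ 2 + ‖P ∘L L ∘L Q‖ ^ 2) + ω) * ‖x‖ ^ 2) ∧
    (∀ t : ℝ, 0 ≤ t →
        ‖NormedSpace.exp ((t : ℂ) • (L ∘L Q))‖ ≤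
          Real.exp ((1 / 2) * (Real.sqrt (ω ^ 2 + ‖P ∘L L ∘L Q‖ ^ 2) + ω) * t)) := by
  have hPP : ∀ v : H, P (P v) = P v := fun v => ContinuousLinearMap.ext_iff.mp hPproj v
  have hPinner : ∀ a b : H, (inner ℂ (P a) b : ℂ) = inner ℂ a (P b) := by
    intro a b
    conv_lhs => rw [← hPadj]
    exact ContinuousLinearMap.adjoint_inner_left P b a
  have hQQ : ∀ v : H, Q (Q v) = Q v := by
    intro v
    simp [hQ, map_sub, hPP]
  set b : ℝ := ‖P ∘L L ∘L Q‖ with hbdef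
  have hb0 : 0 ≤ b := norm_nonneg _
  have part1 : ∀ x : H, (inner ℂ x (L (Q x)) : ℂ).re ≤
      (1 / 2) * (Real.sqrt (ω ^ 2 + b ^ 2) + ω) * ‖x‖ ^ 2 := by
    intro x
    have hx : Q x + P x = x := by simp [hQ]
    have horth : (inner ℂ (Q x) (P x) : ℂ) = 0 := by
      have : (inner ℂ (P x) (P x) : ℂ) = inner ℂ x (P x) := by
        rw [hPinner x (P x)]; rw [hPP x]
      simp [hQ, inner_sub_left, this]
      rw [← this, inner_self_eq_norm_sq_to_K]; exact sub_self _
    have hnorm : ‖x‖ ^ 2 = ‖Q x‖ ^ 2 + ‖P x‖ ^ 2 := by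
      have := norm_add_sq (𝕜 := ℂ) (Q x) (P x)
      rw [hx, horth] at this
      simpa using this
    have hsplit : (inner ℂ x (L (Q x)) : ℂ).re
        = (inner ℂ (Q x) (L (Q x)) : ℂ).re + (inner ℂ (P x) ((P ∘L L ∘L Q) (Q x)) : ℂ).re := by
      have hadd := inner_add_left (𝕜 := ℂ) (Q x) (P x) (L (Q x))
      rw [hx] at hadd
      rw [hadd]
      have : (inner ℂ (P x) (L (Q x)) : ℂ) = inner ℂ (P x) ((P ∘L L ∘L Q) (Q x)) := by
        conv_lhs => rw [← hPP x]
        rw [hPinner (P x) (L (Q x))]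
        simp [hQQ x]
      rw [this, Complex.add_re]
    have h1 : (inner ℂ (Q x) (L (Q x)) : ℂ).re ≤ ω * ‖Q x‖ ^ 2 := hω (Q x)
    have h2 : (inner ℂ (P x) ((P ∘L L ∘L Q) (Q x)) : ℂ).re ≤ ‖P x‖ * (b * ‖Q x‖) := by
      calc (inner ℂ (P x) ((P ∘L L ∘L Q) (Q x)) : ℂ).re
          ≤ ‖P x‖ * ‖(P ∘L L ∘L Q) (Q x)‖ := by
            have := re_inner_le_norm (𝕜 := ℂ) (P x) ((P ∘L L ∘L Q) (Q x))
            rwa [RCLike.re_to_complex] at this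
        _ ≤ ‖P x‖ * (b * ‖Q x‖) := by
            gcongr
            exact (P ∘L L ∘L Q).le_opNorm (Q x)
    have h3 := quad_aux ω b ‖Q x‖ ‖P x‖ hb0
    rw [hsplit, hnorm]
    nlinarith
  refine ⟨part1, ?_⟩
  intro t ht
  apply exp_norm_bound (L ∘L Q) ((1 / 2) * (Real.sqrt (ω ^ 2 + b ^ 2) + ω)) _ t ht
  intro x
  simpa using part1 x
end

section
/- Let E be a real Banach space, P : E → E a continuous linear map, T : ℝ → (E → E) a family of continuous linear operators such that for every x ∈ E the map t ↦ T(t)x is continuous, with constants M_Q > 0 and ω_Q ∈ ℝ satisfying ‖T(t)‖ ≤ M_Q·exp(ω_Q·t) for all t ≥ 0. Let T_f > 0 be a fixed final time, let q ≥ 1 be an integer, set A₂ = max(1, exp(T_f·ω_Q)), let h : ℝ → E be a continuous function, and let D ≥ 0 satisfy ‖h(s)‖ ≤ D for all s ∈ [0, T_f]. Then for every t ∈ [0, T_f], the q-th order H-model truncation error of the PDF-space memory integral satisfies ‖∫₀ᵗ ((t−σ)^{q−1}/(q−1)!) · (∫₀^σ P(T(σ−s)(h(s))) ds) dσ‖ ≤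 ‖P‖·M_Q·A₂·D·t^{q+1}/(q+1)!. -/
open MeasureTheory intervalIntegral Filter

/-- **Accuracy of the H-model in PDF space** (Theorem B.3, abstract form).
Bound on the q-th order H-model truncation error of the PDF-space Mori–Zwanzig
memory integral, written via Cauchy's formula for repeated integration. -/
theorem mz_pdf_H_model_accuracy
    {E : Type*} [NormedAddCommGroup E] [NormedSpace ℝ E] [CompleteSpace E]
    (P : E →L[ℝ] E) (T : ℝ → (E →L[ℝ] E))
    (hTcont : ∀ x : E, Continuous fun t : ℝ => T t x)
    (MQ : ℝ) (hMQ : 0 < MQ) (ωQ : ℝ)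
    (hT : ∀ t : ℝ, 0 ≤ t → ‖T t‖ ≤ MQ * Real.exp (ωQ * t))
    (Tf : ℝ) (hTf : 0 < Tf) (q : ℕ) (hq : 1 ≤ q)
    (A₂ : ℝ) (hA₂ : A₂ = max 1 (Real.exp (Tf * ωQ)))
    (h : ℝ → E) (hh : Continuous h)
    (D : ℝ) (hD : 0 ≤ D)
    (hhb : ∀ s ∈ Set.Icc (0 : ℝ) Tf, ‖h s‖ ≤ D)
    (t : ℝ) (ht : t ∈ Set.Icc (0 : ℝ) Tf) :
    ‖∫ σ in (0:ℝ)..t, ((t - σ) ^ (q - 1) / (Nat.factorial (q - 1) : ℝ)) •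
        (∫ s in (0:ℝ)..σ, P (T (σ - s) (h s)))‖ ≤
      ‖P‖ * MQ * A₂ * D * t ^ (q + 1) / (Nat.factorial (q + 1) : ℝ) := by
  obtain ⟨r, rfl⟩ : ∃ r, q = r + 1 := ⟨q - 1, (Nat.succ_pred_eq_of_pos hq).symm⟩
  obtain ⟨ht0, htf⟩ := ht
  set C : ℝ := ‖P‖ * MQ * A₂ * D with hC
  have hA₂pos : 0 < A₂ := by
    rw [hA₂]; exact lt_of_lt_of_le one_pos (le_max_left _ _)
  have hCnn : 0 ≤ C := by positivity
  -- exponential bound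
  have hexp : ∀ u : ℝ, 0 ≤ u → u ≤ Tf → Real.exp (ωQ * u) ≤ A₂ := by
    intro u hu hutf
    rw [hA₂]
    rcases le_or_gt 0 ωQ with hω | hω
    · exact le_max_of_le_right (Real.exp_le_exp.mpr (by nlinarith))
    · exact le_max_of_le_left (by
        rw [Real.exp_le_one_iff]; nlinarith)
  -- inner integral bound
  have hinner : ∀ σ ∈ Set.Ioc (0:ℝ) t,
      ‖∫ s in (0:ℝ)..σ, P (T (σ - s) (h s))‖ ≤ C * σ := by
    intro σ hσ
    have hσt : σ ≤ Tf := hσ.2.trans htf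
    have key : ‖∫ s in (0:ℝ)..σ, P (T (σ - s) (h s))‖ ≤ C * |σ - 0| := by
      apply intervalIntegral.norm_integral_le_of_norm_le_const
      intro s hs
      rw [Set.uIoc_of_le hσ.1.le] at hs
      have hs0 : 0 ≤ s := hs.1.le
      have hsσ : s ≤ σ := hs.2
      have h1 : ‖P (T (σ - s) (h s))‖ ≤ ‖P‖ * (‖T (σ - s)‖ * ‖h s‖) := by
        calc ‖P (T (σ - s) (h s))‖ ≤ ‖P‖ * ‖T (σ - s) (h s)‖ := P.le_opNorm _
        _ ≤ ‖P‖ * (‖T (σ - s)‖ * ‖h s‖) := by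
            gcongr; exact (T (σ - s)).le_opNorm _
      have h2 : ‖T (σ - s)‖ ≤ MQ * A₂ := by
        calc ‖T (σ - s)‖ ≤ MQ * Real.exp (ωQ * (σ - s)) := hT _ (by linarith)
        _ ≤ MQ * A₂ := mul_le_mul_of_nonneg_left (hexp _ (by linarith) (by linarith)) hMQ.le
      have h3 : ‖h s‖ ≤ D := hhb s ⟨hs0, hsσ.trans hσt⟩
      calc ‖P (T (σ - s) (h s))‖ ≤ ‖P‖ * (‖T (σ - s)‖ * ‖h s‖) := h1
      _ ≤ ‖P‖ * ((MQ * A₂) * D) :=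
          mul_le_mul_of_nonneg_left
            (mul_le_mul h2 h3 (norm_nonneg _) (by positivity)) (norm_nonneg _)
      _ = C := by rw [hC]; ring
    rwa [sub_zero, abs_of_pos hσ.1] at key
  -- bound the outer integral by the real-valued integral
  have houter : ‖∫ σ in (0:ℝ)..t, ((t - σ) ^ r / (Nat.factorial r : ℝ)) •
        (∫ s in (0:ℝ)..σ, P (T (σ - s) (h s)))‖ ≤
      |∫ σ in (0:ℝ)..t, ((t - σ) ^ r / (Nat.factorial r : ℝ)) * (C * σ)| := by
    apply intervalIntegral.norm_integral_le_abs_of_norm_le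
    · rw [Set.uIoc_of_le ht0, ae_restrict_iff' measurableSet_Ioc]
      filter_upwards with σ hσ
      have h1 : 0 ≤ (t - σ) ^ r / (Nat.factorial r : ℝ) := by
        apply div_nonneg (pow_nonneg (by linarith [hσ.2]) r)
        positivity
      rw [norm_smul, Real.norm_eq_abs, abs_of_nonneg h1]
      exact mul_le_mul_of_nonneg_left (hinner σ hσ) h1
    · apply Continuous.intervalIntegrable
      continuity
  -- compute the real-valued integral
  have hint : ∫ σ in (0:ℝ)..t, ((t - σ) ^ r / (Nat.factorial r : ℝ)) * (C * σ) =
      C / (Nat.factorial r : ℝ) * ∫ σ in (0:ℝ)..t, (t - σ) ^ r * σ := by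
    rw [← intervalIntegral.integral_const_mul]
    congr 1; ext σ; ring
  have hbeta : ∫ σ in (0:ℝ)..t, (t - σ) ^ r * σ = t ^ (r + 2) / ((r + 1) * (r + 2)) := by
    have hsub : (∫ σ in (0:ℝ)..t, (t - σ) ^ r * σ) =
        ∫ u in (0:ℝ)..t, u ^ r * (t - u) := by
      have := intervalIntegral.integral_comp_sub_left
        (fun u : ℝ => u ^ r * (t - u)) t (a := 0) (b := t)
      simp only [sub_sub_cancel, sub_self, sub_zero] at this
      exact this
    rw [hsub]
    have h1 : (∫ u in (0:ℝ)..t, u ^ r * (t - u)) =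
        (∫ u in (0:ℝ)..t, t * u ^ r) - ∫ u in (0:ℝ)..t, u ^ (r + 1) := by
      rw [← intervalIntegral.integral_sub (f := fun u : ℝ => t * u ^ r)
        ((continuous_const.mul (continuous_pow r)).intervalIntegrable _ _)
        ((continuous_pow (r + 1)).intervalIntegrable _ _)]
      congr 1; ext u; ring
    rw [h1, intervalIntegral.integral_const_mul, integral_pow, integral_pow]
    have hr1 : (0:ℝ) < (r:ℝ) + 1 := by positivity
    have hr2 : (0:ℝ) < (r:ℝ) + 2 := by positivity
    field_simp
    push_cast
    ring
  rw [hint, hbeta] at houter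
  refine houter.trans (le_of_eq ?_)
  have hfac : ((r + 1 + 1).factorial : ℝ) =
      ((r:ℝ) + 2) * ((r:ℝ) + 1) * (r.factorial : ℝ) := by
    push_cast [Nat.factorial_succ]
    ring
  have habs : C / (Nat.factorial r : ℝ) * (t ^ (r + 2) / ((r + 1) * (r + 2))) =
      C * t ^ (r + 1 + 1) / ((r + 1 + 1).factorial : ℝ) := by
    rw [hfac, div_mul_div_comm]
    congr 1
    ring
  rw [abs_of_nonneg (by positivity), habs]
end
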